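/- arXiv:math/9604212 — 7 statements merged into one kernel-verified Lean document; each statement's English description precedes it below -/
import Mathlib

section
/- Let X₀ be a closed linear subspace of the real Banach space X, and let f ∈ L₀(X) lie in the closure of the set of μ-a.e. X₀-valued functions for the topology of scalar convergence in measure; explicitly, suppose that for every ε > 0 and every finite collection x₁*, …, x_N* ∈ X* there exists g ∈ L₀(X) with g(ω) ∈ X₀ for μ-a.e. ω such that μ{ω : |xᵢ*(f(ω) − g(ω))| ≥ ε} < ε for each 1 ≤ i ≤ N. Then f(ω) ∈ X₀ for μ-a.e. ω. In particular, if a sequence (f_n) in L₀(X) with f_n(ω) ∈ X₀ μ-a.e. for every n converges scalarly in measure to f ∈ L₀(X), then f(ω) ∈ X₀ for μ-a.e. ω. -/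
open MeasureTheory Filter Topology ENNReal Set

noncomputable section

/-- Lebesgue measure on `[0,1]`, as a measure on `ℝ`. -/
def μ01 : Measure ℝ := volume.restrict (Set.Icc 0 1)

section Defs
variable {X : Type*} [NormedAddCommGroup X] [NormedSpace ℝ X]

/-- `(f n)` converges to `g` scalarly in measure. -/
def ScalarInMeasure (f : ℕ → ℝ → X) (g : ℝ → X) : Prop :=
  ∀ φ : X →L[ℝ] ℝ,
    TendstoInMeasure μ01 (fun n ω => φ (f n ω)) atTop (fun ω => φ (g ω))

/-- `(f n)` converges to `g` scalarly almost everywhere. -/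
def ScalarAE (f : ℕ → ℝ → X) (g : ℝ → X) : Prop :=
  ∀ φ : X →L[ℝ] ℝ, ∀ᵐ ω ∂μ01,
    Tendsto (fun n => φ (f n ω)) atTop (𝓝 (φ (g ω)))

/-- `(f n)` converges to `g` weakly almost everywhere. -/
def WeaklyAE (f : ℕ → ℝ → X) (g : ℝ → X) : Prop :=
  ∃ A : Set ℝ, MeasurableSet A ∧ μ01 A = 1 ∧
    ∀ ω ∈ A, ∀ φ : X →L[ℝ] ℝ,
      Tendsto (fun n => φ (f n ω)) atTop (𝓝 (φ (g ω)))

/-- `(f n)` converges to `g` scalarly in `L_p`. -/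
def ScalarInLp (p : ℝ≥0∞) (f : ℕ → ℝ → X) (g : ℝ → X) : Prop :=
  ∀ φ : X →L[ℝ] ℝ,
    Tendsto (fun n => eLpNorm (fun ω => φ (f n ω) - φ (g ω)) p μ01) atTop (𝓝 0)

/-- `(f n)` is bounded in `L_p(X)`. -/
def LpBounded (p : ℝ≥0∞) (f : ℕ → ℝ → X) : Prop :=
  ∃ C : ℝ≥0∞, C < ⊤ ∧ ∀ n, eLpNorm (f n) p μ01 ≤ C

/-- `(f n)` is pointwise bounded almost everywhere. -/
def PtwiseBddAE (f : ℕ → ℝ → X) : Prop :=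
  ∀ᵐ ω ∂μ01, BddAbove (Set.range fun n => ‖f n ω‖)

/-- `(f n)` is scalarly Cauchy in measure. -/
def ScalarCauchyInMeasure (f : ℕ → ℝ → X) : Prop :=
  ∀ φ : X →L[ℝ] ℝ, ∀ ε : ℝ, 0 < ε → ∃ N : ℕ, ∀ n ≥ N, ∀ m ≥ N,
    μ01 {ω | ε ≤ |φ (f n ω) - φ (f m ω)|} < ENNReal.ofReal ε

/-- The `q`-Pettis norm of a function (possibly infinite). -/
def pettisNorm (q : ℝ≥0∞) (f : ℝ → X) : ℝ≥0∞ :=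
  ⨆ (φ : X →L[ℝ] ℝ) (_ : ‖φ‖ ≤ 1), eLpNorm (fun ω => φ (f ω)) q μ01

end Defs

/-- `X` is an Asplund space: every closed separable subspace has separable dual. -/
def AsplundCond (X : Type*) [NormedAddCommGroup X] [NormedSpace ℝ X] : Prop :=
  ∀ Y : Submodule ℝ X, IsClosed (Y : Set X) →
    TopologicalSpace.SeparableSpace Y →
    TopologicalSpace.SeparableSpace (StrongDual ℝ Y)


/-- Separation: a norm-≤1 functional vanishing on `X₀` and at least `infDist d X₀` at `d`. -/
lemma sep_aux {X : Type*} [NormedAddCommGroup X] [NormedSpace ℝ X]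
    (X₀ : Submodule ℝ X) (hX₀ : IsClosed (X₀ : Set X)) (d : X) :
    ∃ φ : X →L[ℝ] ℝ, ‖φ‖ ≤ 1 ∧ (∀ y ∈ X₀, φ y = 0) ∧
      Metric.infDist d (X₀ : Set X) ≤ φ d := by
  haveI : IsClosed (X₀ : Set X) := hX₀
  by_cases hd : d ∈ X₀
  · refine ⟨0, by simp, by simp, ?_⟩
    simp [Metric.infDist_zero_of_mem hd]
  · set π : X →L[ℝ] X ⧸ X₀ :=
      LinearMap.mkContinuous X₀.mkQ 1
        (fun m => by simpa using Submodule.Quotient.norm_mk_le X₀ m) with hπ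
    have hπ_apply : ∀ x : X, π x = Submodule.Quotient.mk x := fun x => rfl
    have hπd : π d ≠ 0 := by
      rw [hπ_apply]
      simpa [Submodule.Quotient.mk_eq_zero] using hd
    obtain ⟨g, hg1, hg2⟩ := exists_dual_vector ℝ (π d) (norm_ne_zero_iff.2 hπd)
    refine ⟨g.comp π, ?_, ?_, ?_⟩
    · calc ‖g.comp π‖ ≤ ‖g‖ * ‖π‖ := g.opNorm_comp_le π
        _ = ‖π‖ := by rw [hg1, one_mul]
        _ ≤ 1 := LinearMap.mkContinuous_norm_le _ zero_le_one _
    · intro y hy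
      have : π y = 0 := by rw [hπ_apply, Submodule.Quotient.mk_eq_zero]; exact hy
      simp [ContinuousLinearMap.comp_apply, this]
    · have : ‖π d‖ = Metric.infDist d (X₀ : Set X) := by
        rw [hπ_apply]
        exact QuotientAddGroup.norm_mk d
      rw [ContinuousLinearMap.comp_apply, hg2, this]
      norm_num

/-- Core: if every functional vanishing on `X₀` vanishes a.e. along `f`, then `f ∈ X₀` a.e. -/
lemma core_aux {X : Type*} [NormedAddCommGroup X] [NormedSpace ℝ X]
    (X₀ : Submodule ℝ X) (hX₀ : IsClosed (X₀ : Set X)) (f : ℝ → X)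
    (hf : AEStronglyMeasurable f μ01)
    (h : ∀ φ : X →L[ℝ] ℝ, (∀ y ∈ X₀, φ y = 0) → ∀ᵐ ω ∂μ01, φ (f ω) = 0) :
    ∀ᵐ ω ∂μ01, f ω ∈ X₀ := by
  obtain ⟨c, hc, hsub⟩ := hf.stronglyMeasurable_mk.isSeparable_range
  choose φ hφ1 hφ2 hφ3 using fun d : X => sep_aux X₀ hX₀ d
  have hall : ∀ᵐ ω ∂μ01, ∀ d ∈ c, φ d (f ω) = 0 :=
    (ae_ball_iff hc).2 fun d _ => h (φ d) (hφ2 d)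
  filter_upwards [hall, hf.ae_eq_mk] with ω hω hmk
  have hx : f ω ∈ closure c := by rw [hmk]; exact hsub (mem_range_self ω)
  by_contra hmem
  have hδ : 0 < Metric.infDist (f ω) (X₀ : Set X) :=
    (hX₀.notMem_iff_infDist_pos ⟨0, X₀.zero_mem⟩).1 hmem
  set δ := Metric.infDist (f ω) (X₀ : Set X) with hδdef
  obtain ⟨d, hdc, hdist⟩ := Metric.mem_closure_iff.1 hx (δ / 3) (by linarith)
  have h1 : δ ≤ Metric.infDist d (X₀ : Set X) + dist (f ω) d :=
    Metric.infDist_le_infDist_add_dist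
  have h2 : Metric.infDist d (X₀ : Set X) ≤ φ d d := hφ3 d
  have h3 : |φ d (f ω) - φ d d| ≤ dist (f ω) d := by
    rw [← map_sub, dist_eq_norm]
    calc |φ d (f ω - d)| ≤ ‖φ d‖ * ‖f ω - d‖ := (φ d).le_opNorm _
      _ ≤ 1 * ‖f ω - d‖ := by
          exact mul_le_mul_of_nonneg_right (hφ1 d) (norm_nonneg _)
      _ = ‖f ω - d‖ := one_mul _
  rw [hω d hdc] at h3
  have h4 : Metric.infDist d (X₀ : Set X) ≥ 0 := Metric.infDist_nonneg
  have h5 : |0 - φ d d| = φ d d := by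
    rw [zero_sub, abs_neg, abs_of_nonneg (le_trans h4 h2)]
  rw [h5] at h3
  linarith

lemma main1_aux {X : Type*} [NormedAddCommGroup X] [NormedSpace ℝ X]
    (X₀ : Submodule ℝ X) (hX₀ : IsClosed (X₀ : Set X)) :
    ∀ f : ℝ → X, AEStronglyMeasurable f μ01 →
      (∀ ε : ℝ, 0 < ε → ∀ (N : ℕ) (φ : Fin N → X →L[ℝ] ℝ),
        ∃ g : ℝ → X, AEStronglyMeasurable g μ01 ∧ (∀ᵐ ω ∂μ01, g ω ∈ X₀) ∧
          ∀ i : Fin N, μ01 {ω | ε ≤ |φ i (f ω - g ω)|} < ENNReal.ofReal ε) →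
      ∀ᵐ ω ∂μ01, f ω ∈ X₀ := by
  intro f hf hF
  refine core_aux X₀ hX₀ f hf ?_
  intro φ hφ
  -- for each δ > 0, the set {δ ≤ |φ (f ω)|} is null
  have key : ∀ δ : ℝ, 0 < δ → μ01 {ω | δ ≤ |φ (f ω)|} = 0 := by
    intro δ hδ
    have hle : ∀ ε : ℝ, 0 < ε → ε ≤ δ → μ01 {ω | δ ≤ |φ (f ω)|} ≤ ENNReal.ofReal ε := by
      intro ε hε hεδ
      obtain ⟨g, hg, hgmem, hlt⟩ := hF ε hε 1 (fun _ => φ)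
      have hg0 : ∀ᵐ ω ∂μ01, φ (g ω) = 0 := hgmem.mono fun ω hω => hφ _ hω
      have hsub : ∀ᵐ ω ∂μ01, ω ∈ {ω | δ ≤ |φ (f ω)|} → ω ∈ {ω | ε ≤ |φ (f ω - g ω)|} := by
        filter_upwards [hg0] with ω h0 hωA
        simp only [Set.mem_setOf_eq, map_sub, h0, sub_zero] at *
        linarith
      exact ((measure_mono_ae hsub).trans_lt (hlt 0)).le
    have hseq : ∀ n : ℕ, μ01 {ω | δ ≤ |φ (f ω)|} ≤ ENNReal.ofReal (min δ (1 / (n + 1))) := by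
      intro n
      refine hle _ (lt_min hδ (by positivity)) (min_le_left _ _)
    have htend : Tendsto (fun n : ℕ => ENNReal.ofReal (min δ (1 / (n + 1)))) atTop (𝓝 0) := by
      have : Tendsto (fun n : ℕ => min δ (1 / (n + 1) : ℝ)) atTop (𝓝 (min δ 0)) :=
        tendsto_const_nhds.min tendsto_one_div_add_atTop_nhds_zero_nat
      rw [min_eq_right hδ.le] at this
      simpa using (ENNReal.tendsto_ofReal this)
    exact le_antisymm (ge_of_tendsto' htend hseq) zero_le
  -- conclude φ ∘ f = 0 a.e.
  rw [MeasureTheory.ae_iff]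
  have hsub : {ω | ¬ φ (f ω) = 0} ⊆ ⋃ n : ℕ, {ω | (1 / (n + 1) : ℝ) ≤ |φ (f ω)|} := by
    intro ω hω
    have : 0 < |φ (f ω)| := abs_pos.2 hω
    obtain ⟨n, hn⟩ := exists_nat_one_div_lt this
    exact Set.mem_iUnion.2 ⟨n, hn.le⟩
  refine measure_mono_null hsub (measure_iUnion_null fun n => key _ (by positivity))

theorem stmt_0 {X : Type*} [NormedAddCommGroup X] [NormedSpace ℝ X] [CompleteSpace X]
    (X₀ : Submodule ℝ X) (hX₀ : IsClosed (X₀ : Set X)) :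
    (∀ f : ℝ → X, AEStronglyMeasurable f μ01 →
      (∀ ε : ℝ, 0 < ε → ∀ (N : ℕ) (φ : Fin N → X →L[ℝ] ℝ),
        ∃ g : ℝ → X, AEStronglyMeasurable g μ01 ∧ (∀ᵐ ω ∂μ01, g ω ∈ X₀) ∧
          ∀ i : Fin N, μ01 {ω | ε ≤ |φ i (f ω - g ω)|} < ENNReal.ofReal ε) →
      ∀ᵐ ω ∂μ01, f ω ∈ X₀) ∧
    (∀ (f : ℕ → ℝ → X) (g : ℝ → X), (∀ n, AEStronglyMeasurable (f n) μ01) →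
      AEStronglyMeasurable g μ01 → (∀ n, ∀ᵐ ω ∂μ01, f n ω ∈ X₀) →
      ScalarInMeasure f g → ∀ᵐ ω ∂μ01, g ω ∈ X₀) := by
  constructor
  · exact main1_aux X₀ hX₀
  · intro f g hfm hgm hmem hconv
    refine main1_aux X₀ hX₀ g hgm ?_
    intro ε hε N φ
    have hev : ∀ᶠ n in atTop, ∀ i : Fin N,
        μ01 {x | ε ≤ dist (φ i (f n x)) (φ i (g x))} < ENNReal.ofReal ε := by
      rw [eventually_all]
      intro i
      exact Filter.Tendsto.eventually_lt_const (ENNReal.ofReal_pos.2 hε) (tendstoInMeasure_iff_dist.1 (hconv (φ i)) ε hε)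
    obtain ⟨n, hn⟩ := hev.exists
    refine ⟨f n, hfm n, hmem n, fun i => ?_⟩
    have hset : {ω | ε ≤ |φ i (g ω - f n ω)|} = {x | ε ≤ dist (φ i (f n x)) (φ i (g x))} := by
      ext x
      simp [Real.dist_eq, map_sub, abs_sub_comm]
    rw [hset]
    exact hn i
end
end

section
/- Suppose every closed separable subspace of the real Banach space X has a separable dual (i.e., X is an Asplund space, equivalently X* has the Radon–Nikodým property). Then: (1) if a sequence (f_n) in L₀(X) converges scalarly a.e. to f ∈ L₀(X), then (f_n) converges weakly a.e. to f if and only if (f_n) is pointwise bounded a.e.; (2) if (f_n) converges scalarly a.e. to f, then (f_n) has a subsequence converging weakly a.e. to f if and only if (f_n) has a subsequence that is pointwise bounded a.e.; (3) if (f_n) converges scalarly in measure to f ∈ L₀(X), then (f_n) has a subsequence converging weakly a.e. to f if and only if (f_n) has a subsequence that is pointwise bounded a.e. -/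
open MeasureTheory Filter Topology ENNReal Set

noncomputable section

lemma μ01_univ : μ01 Set.univ = 1 := by
  simp [μ01, Real.volume_Icc]

instance : IsProbabilityMeasure μ01 := ⟨μ01_univ⟩

-- pointwise Banach-Steinhaus
lemma weak_conv_bdd {X : Type*} [NormedAddCommGroup X] [NormedSpace ℝ X]
    (y : ℕ → X) (z : X)
    (h : ∀ φ : X →L[ℝ] ℝ, Tendsto (fun n => φ (y n)) atTop (𝓝 (φ z))) :
    BddAbove (Set.range fun n => ‖y n‖) := by
  have hbs := banach_steinhaus (g := fun n => NormedSpace.inclusionInDoubleDual ℝ X (y n))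
    (fun φ => ?_)
  · obtain ⟨C, hC⟩ := hbs
    refine ⟨C, ?_⟩
    rintro - ⟨n, rfl⟩
    have := hC n
    rwa [show NormedSpace.inclusionInDoubleDual ℝ X (y n)
        = (NormedSpace.inclusionInDoubleDualLi ℝ (E := X)) (y n) from rfl,
      (NormedSpace.inclusionInDoubleDualLi ℝ (E := X)).norm_map] at this
  · obtain ⟨C, hC⟩ := (h φ).bddAbove_range.union (h φ).bddAbove_range
    -- bound |φ (y n)|
    have h2 : BddAbove (Set.range fun n => |φ (y n)|) := by
      obtain ⟨c, hc⟩ := (h φ).bddAbove_range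
      obtain ⟨c', hc'⟩ := (Filter.Tendsto.neg (h φ)).bddAbove_range
      refine ⟨max c c', ?_⟩
      rintro - ⟨n, rfl⟩
      simp only
      rcases abs_cases (φ (y n)) with ⟨he, _⟩ | ⟨he, _⟩
      · rw [he]; exact le_max_of_le_left (hc ⟨n, rfl⟩)
      · rw [he]; exact le_max_of_le_right (hc' ⟨n, rfl⟩)
    obtain ⟨c, hc⟩ := h2
    exact ⟨c, fun n => by simpa using hc ⟨n, rfl⟩⟩


section Aux
variable {X : Type*} [NormedAddCommGroup X] [NormedSpace ℝ X]

lemma weaklyAE_to_ptwise {f : ℕ → ℝ → X} {g : ℝ → X} (h : WeaklyAE f g) : PtwiseBddAE f := by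
  obtain ⟨A, hAm, hA1, hA⟩ := h
  have hAc : μ01 Aᶜ = 0 := by
    have := measure_compl hAm (measure_ne_top μ01 A)
    rw [hA1, μ01_univ] at this
    simpa using this
  filter_upwards [(ae_iff (p := fun ω => ω ∈ A)).2 (by exact hAc)] with ω hω
  exact weak_conv_bdd (fun n => f n ω) (g ω) (hA ω hω)

/-- Construct a `WeaklyAE` witness from an a.e. property. -/
lemma weaklyAE_of_ae {f : ℕ → ℝ → X} {g : ℝ → X} {E : Set ℝ}
    (hE : ∀ᵐ ω ∂μ01, ω ∈ E)
    (h : ∀ ω ∈ E, ∀ φ : X →L[ℝ] ℝ, Tendsto (fun n => φ (f n ω)) atTop (𝓝 (φ (g ω)))) :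
    WeaklyAE f g := by
  set A := (toMeasurable μ01 Eᶜ)ᶜ with hAdef
  have hEc : μ01 Eᶜ = 0 := by
    rw [ae_iff] at hE; exact hE
  have hAm : MeasurableSet A := (measurableSet_toMeasurable μ01 Eᶜ).compl
  have hA0 : μ01 Aᶜ = 0 := by
    rw [hAdef, compl_compl, measure_toMeasurable]; exact hEc
  refine ⟨A, hAm, ?_, fun ω hω => h ω ?_⟩
  · exact (prob_compl_eq_zero_iff hAm).1 hA0
  · by_contra hc
    exact absurd (subset_toMeasurable μ01 Eᶜ hc) hω

/-- Values of the sequence and limit lie a.e. in a closed separable subspace. -/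
lemma exists_sep_subspace {f : ℕ → ℝ → X} {g : ℝ → X}
    (hf : ∀ n, AEStronglyMeasurable (f n) μ01) (hg : AEStronglyMeasurable g μ01) :
    ∃ Y : Submodule ℝ X, IsClosed (Y : Set X) ∧ TopologicalSpace.SeparableSpace Y ∧
      (∀ᵐ ω ∂μ01, (∀ n, f n ω ∈ Y) ∧ g ω ∈ Y) := by
  set s : Set X := (⋃ n, Set.range ((hf n).mk (f n))) ∪ Set.range (hg.mk g) with hs
  have hssep : TopologicalSpace.IsSeparable s :=
    ((TopologicalSpace.IsSeparable.iUnion fun n => ((hf n).stronglyMeasurable_mk).isSeparable_range)).union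
      hg.stronglyMeasurable_mk.isSeparable_range
  refine ⟨(Submodule.span ℝ s).topologicalClosure,
    Submodule.isClosed_topologicalClosure _, ?_, ?_⟩
  · exact (hssep.span.closure).separableSpace
  · filter_upwards [ae_all_iff.2 fun n => (hf n).ae_eq_mk, hg.ae_eq_mk] with ω hω hgω
    constructor
    · intro n
      have : f n ω ∈ s := by
        rw [hω n]; exact Or.inl (Set.mem_iUnion.2 ⟨n, Set.mem_range_self ω⟩)
      exact Submodule.le_topologicalClosure _ (Submodule.subset_span this)
    · have : g ω ∈ s := by rw [hgω]; exact Or.inr (Set.mem_range_self ω)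
      exact Submodule.le_topologicalClosure _ (Submodule.subset_span this)

end Aux

section Core
variable {X : Type*} [NormedAddCommGroup X] [NormedSpace ℝ X]

lemma exists_sep_family (hAsp : AsplundCond X) (Y : Submodule ℝ X)
    (hYc : IsClosed (Y : Set X)) (hYs : TopologicalSpace.SeparableSpace Y) :
    ∃ Φ : ℕ → X →L[ℝ] ℝ, ∀ (y : ℕ → X) (z : X), (∀ n, y n ∈ Y) → z ∈ Y →
      BddAbove (Set.range fun n => ‖y n‖) →
      (∀ k, Tendsto (fun n => Φ k (y n)) atTop (𝓝 (Φ k z))) →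
      ∀ φ : X →L[ℝ] ℝ, Tendsto (fun n => φ (y n)) atTop (𝓝 (φ z)) := by
  haveI := hAsp Y hYc hYs
  obtain ⟨D, hD⟩ := TopologicalSpace.exists_dense_seq (StrongDual ℝ Y)
  choose Φ hΦ _ using fun k => exists_extension_norm_eq (Y : Subspace ℝ X) (D k)
  refine ⟨Φ, ?_⟩
  rintro y z hy hz ⟨c, hc⟩ hconv φ
  set Z : Y := ⟨z, hz⟩
  set Yn : ℕ → Y := fun n => ⟨y n, hy n⟩
  set ψ : StrongDual ℝ Y := φ.comp Y.subtypeL with hψ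
  have hcb : ∀ n, ‖y n‖ ≤ c := fun n => hc ⟨n, rfl⟩
  set b : ℝ := max c ‖z‖ + 1 with hb
  have hb0 : 0 < b := by positivity
  have hbn : ∀ n, ‖(Yn n : Y)‖ ≤ b := fun n => by
    show ‖y n‖ ≤ b
    calc ‖y n‖ ≤ c := hcb n
    _ ≤ b := by rw [hb]; nlinarith [le_max_left c ‖z‖]
  have hbz : ‖(Z : Y)‖ ≤ b := by
    show ‖z‖ ≤ b
    rw [hb]; nlinarith [le_max_right c ‖z‖]
  rw [Metric.tendsto_atTop]
  intro ε hε
  obtain ⟨k, hk⟩ := Metric.denseRange_iff.1 hD ψ (ε / (3 * b)) (by positivity)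
  have hnorm : ‖D k - ψ‖ < ε / (3 * b) := by
    calc ‖D k - ψ‖ = dist (D k) ψ := (dist_eq_norm (D k) ψ).symm
      _ = dist ψ (D k) := dist_comm _ _
      _ < ε / (3 * b) := hk
  obtain ⟨N, hN⟩ := Metric.tendsto_atTop.1 (hconv k) (ε / 3) (by positivity)
  refine ⟨N, fun n hn => ?_⟩
  have key : ∀ w : Y, Φ k (w : X) = D k w := fun w => hΦ k w
  have e1 : φ (y n) = ψ (Yn n) := rfl
  have e2 : φ z = ψ Z := rfl
  have hbound : ∀ w : Y, ‖w‖ ≤ b → |D k w - ψ w| ≤ ε / 3 := by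
    intro w hw
    have : |(D k - ψ) w| ≤ ‖D k - ψ‖ * ‖w‖ := (D k - ψ).le_opNorm w
    simp only [ContinuousLinearMap.sub_apply] at this
    calc |D k w - ψ w| ≤ ‖D k - ψ‖ * ‖w‖ := by simpa using this
      _ ≤ (ε / (3 * b)) * b := by
          apply mul_le_mul hnorm.le hw (norm_nonneg _) (by positivity)
      _ = ε / 3 := by field_simp
  have hmid : |Φ k (y n) - Φ k z| < ε / 3 := by
    have := hN n hn
    rwa [Real.dist_eq] at this
  have hmid' : |D k (Yn n) - D k Z| < ε / 3 := by
    rwa [← key (Yn n), ← key Z]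
  rw [Real.dist_eq, e1, e2]
  calc |ψ (Yn n) - ψ Z|
      ≤ |ψ (Yn n) - D k (Yn n)| + |D k (Yn n) - D k Z| + |D k Z - ψ Z| := by
        have := abs_sub_le (ψ (Yn n)) (D k (Yn n)) (ψ Z)
        have h2 := abs_sub_le (D k (Yn n)) (D k Z) (ψ Z)
        linarith
    _ < ε / 3 + ε / 3 + ε / 3 := by
        have h1 : |ψ (Yn n) - D k (Yn n)| ≤ ε / 3 := by
          rw [abs_sub_comm]; exact hbound _ (hbn n)
        have h3 : |D k Z - ψ Z| ≤ ε / 3 := hbound _ hbz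
        -- need strict somewhere: hmid' is strict
        linarith [h1, hmid', h3]
    _ = ε := by ring

end Core

section Assemble
variable {X : Type*} [NormedAddCommGroup X] [NormedSpace ℝ X]

lemma weaklyAE_of_ptwise (hAsp : AsplundCond X) {f : ℕ → ℝ → X} {g : ℝ → X}
    (hf : ∀ n, AEStronglyMeasurable (f n) μ01) (hg : AEStronglyMeasurable g μ01)
    (hb : PtwiseBddAE f)
    (hconv : ∀ φ : X →L[ℝ] ℝ, ∀ᵐ ω ∂μ01,
      Tendsto (fun n => φ (f n ω)) atTop (𝓝 (φ (g ω)))) :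
    WeaklyAE f g := by
  obtain ⟨Y, hYc, hYs, hmem⟩ := exists_sep_subspace hf hg
  obtain ⟨Φ, hΦ⟩ := exists_sep_family hAsp Y hYc hYs
  set E : Set ℝ := {ω | (∀ n, f n ω ∈ Y) ∧ g ω ∈ Y ∧
    BddAbove (Set.range fun n => ‖f n ω‖) ∧
    ∀ k, Tendsto (fun n => Φ k (f n ω)) atTop (𝓝 (Φ k (g ω)))} with hEdef
  have hE : ∀ᵐ ω ∂μ01, ω ∈ E := by
    filter_upwards [hmem, hb, ae_all_iff.2 fun k => hconv (Φ k)] with ω h1 h2 h3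
    exact ⟨h1.1, h1.2, h2, h3⟩
  exact weaklyAE_of_ae hE fun ω hω φ =>
    hΦ (fun n => f n ω) (g ω) hω.1 hω.2.1 hω.2.2.1 hω.2.2.2 φ

end Assemble

section Diagonal

/-- Abstract diagonalization. -/
lemma diagonal_subseq {Q : ℕ → (ℕ → ℕ) → Prop}
    (hcomp : ∀ k (s e : ℕ → ℕ), Tendsto e atTop atTop → Q k s → Q k (s ∘ e))
    (htail : ∀ k (s : ℕ → ℕ) (j : ℕ), Q k (fun i => s (i + j)) → Q k s)
    (hext : ∀ k (s : ℕ → ℕ), StrictMono s → ∃ t, StrictMono t ∧ Q k (s ∘ t)) :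
    ∃ d : ℕ → ℕ, StrictMono d ∧ ∀ k, Q k d := by
  -- iteratively refine
  have step : ∀ k (s : {s : ℕ → ℕ // StrictMono s}),
      ∃ s' : {s : ℕ → ℕ // StrictMono s}, Q k s'.1 ∧
        ∃ t : ℕ → ℕ, StrictMono t ∧ s'.1 = s.1 ∘ t := by
    rintro k ⟨s, hs⟩
    obtain ⟨t, ht, hQ⟩ := hext k s hs
    exact ⟨⟨s ∘ t, hs.comp ht⟩, hQ, t, ht, rfl⟩
  -- define the sequence of subsequences
  let S : ℕ → {s : ℕ → ℕ // StrictMono s} :=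
    fun k => Nat.rec (Classical.choose (step 0 ⟨id, strictMono_id⟩))
      (fun k prev => Classical.choose (step (k+1) prev)) k
  have hS0 : Q 0 (S 0).1 := (Classical.choose_spec (step 0 ⟨id, strictMono_id⟩)).1
  have hSsucc : ∀ k, Q (k+1) (S (k+1)).1 ∧
      ∃ t : ℕ → ℕ, StrictMono t ∧ (S (k+1)).1 = (S k).1 ∘ t :=
    fun k => Classical.choose_spec (step (k+1) (S k))
  have hSQ : ∀ k, Q k (S k).1 := by
    intro k; cases k with
    | zero => exact hS0
    | succ k => exact (hSsucc k).1
  -- relation: S (k+m) is a subsequence of S k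
  have hrel : ∀ k m, ∃ u : ℕ → ℕ, (∀ i, i ≤ u i) ∧ StrictMono u ∧
      (S (k+m)).1 = (S k).1 ∘ u := by
    intro k m
    induction m with
    | zero => exact ⟨id, fun i => le_rfl, strictMono_id, rfl⟩
    | succ m ih =>
      obtain ⟨u, hu1, hu2, hu3⟩ := ih
      obtain ⟨t, ht, hteq⟩ := (hSsucc (k+m)).2
      refine ⟨u ∘ t, fun i => ?_, hu2.comp ht, ?_⟩
      · show i ≤ u (t i)
        exact le_trans ht.le_apply (hu1 (t i))
      show (S (k+m+1)).1 = _
      rw [hteq, hu3]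
      rfl
  -- diagonal
  set d : ℕ → ℕ := fun k => (S k).1 k with hd
  have hdmono : StrictMono d := by
    have hstep : ∀ k, d k < d (k+1) := by
      intro k
      obtain ⟨t, ht, hteq⟩ := (hSsucc k).2
      have : d (k+1) = (S k).1 (t (k+1)) := by rw [hd]; simp only; rw [hteq]; rfl
      rw [this, hd]
      exact (S k).2 (lt_of_lt_of_le (Nat.lt_succ_self k) (ht.le_apply))
    exact strictMono_nat_of_lt_succ hstep
  refine ⟨d, hdmono, fun k => ?_⟩
  -- Q k d : tail of d from k is a subsequence of S k along a tendsto map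
  apply htail k d k
  have : ∀ i, d (i + k) = (S k).1 (Classical.choose (hrel k i) (i+k)) := by
    intro i
    obtain ⟨hu1, hu2, hu3⟩ := Classical.choose_spec (hrel k i)
    have heq : (S (i+k)).1 = (S k).1 ∘ Classical.choose (hrel k i) := by
      rw [Nat.add_comm i k]; exact hu3
    show (S (i+k)).1 (i+k) = _
    rw [heq]; rfl
  have htend : Tendsto (fun i => Classical.choose (hrel k i) (i+k)) atTop atTop := by
    apply tendsto_atTop_mono (fun i => ?_) tendsto_id
    obtain ⟨hu1, hu2, hu3⟩ := Classical.choose_spec (hrel k i)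
    calc (i : ℕ) ≤ i + k := Nat.le_add_right i k
      _ ≤ Classical.choose (hrel k i) (i+k) := hu1 (i+k)
  have : (fun i => d (i + k)) = (S k).1 ∘ (fun i => Classical.choose (hrel k i) (i+k)) := by
    funext i; exact this i
  rw [this]
  exact hcomp k (S k).1 _ htend (hSQ k)

end Diagonal

section Final
variable {X : Type*} [NormedAddCommGroup X] [NormedSpace ℝ X]

lemma exists_subseq_ae_of_inMeasure (F : ℕ → ℕ → ℝ → ℝ) (G : ℕ → ℝ → ℝ)
    (h : ∀ k, TendstoInMeasure μ01 (F k) atTop (G k)) :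
    ∃ σ : ℕ → ℕ, StrictMono σ ∧
      ∀ k, ∀ᵐ ω ∂μ01, Tendsto (fun i => F k (σ i) ω) atTop (𝓝 (G k ω)) := by
  set Q : ℕ → (ℕ → ℕ) → Prop := fun k s =>
    ∀ᵐ ω ∂μ01, Tendsto (fun i => F k (s i) ω) atTop (𝓝 (G k ω)) with hQ
  have := diagonal_subseq (Q := Q) ?_ ?_ ?_
  · obtain ⟨d, hd, hQd⟩ := this
    exact ⟨d, hd, hQd⟩
  · intro k s e he hQs
    filter_upwards [hQs] with ω hω
    exact hω.comp he
  · intro k s j hQs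
    filter_upwards [hQs] with ω hω
    exact (tendsto_add_atTop_iff_nat j).1 hω
  · intro k s hs
    have hm : TendstoInMeasure μ01 (fun i => F k (s i)) atTop (G k) :=
      fun ε hε => (h k ε hε).comp hs.tendsto_atTop
    obtain ⟨t, ht, hae⟩ := hm.exists_seq_tendsto_ae
    exact ⟨t, ht, hae⟩

lemma weaklyAE_of_ptwise_family {f : ℕ → ℝ → X} {g : ℝ → X}
    {Y : Submodule ℝ X} {Φ : ℕ → X →L[ℝ] ℝ}
    (hΦ : ∀ (y : ℕ → X) (z : X), (∀ n, y n ∈ Y) → z ∈ Y →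
      BddAbove (Set.range fun n => ‖y n‖) →
      (∀ k, Tendsto (fun n => Φ k (y n)) atTop (𝓝 (Φ k z))) →
      ∀ φ : X →L[ℝ] ℝ, Tendsto (fun n => φ (y n)) atTop (𝓝 (φ z)))
    (hmem : ∀ᵐ ω ∂μ01, (∀ n, f n ω ∈ Y) ∧ g ω ∈ Y)
    (hb : PtwiseBddAE f)
    (hconv : ∀ k, ∀ᵐ ω ∂μ01, Tendsto (fun n => Φ k (f n ω)) atTop (𝓝 (Φ k (g ω)))) :
    WeaklyAE f g := by
  set E : Set ℝ := {ω | (∀ n, f n ω ∈ Y) ∧ g ω ∈ Y ∧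
    BddAbove (Set.range fun n => ‖f n ω‖) ∧
    ∀ k, Tendsto (fun n => Φ k (f n ω)) atTop (𝓝 (Φ k (g ω)))} with hEdef
  have hE : ∀ᵐ ω ∂μ01, ω ∈ E := by
    filter_upwards [hmem, hb, ae_all_iff.2 hconv] with ω h1 h2 h3
    exact ⟨h1.1, h1.2, h2, h3⟩
  exact weaklyAE_of_ae hE fun ω hω φ =>
    hΦ (fun n => f n ω) (g ω) hω.1 hω.2.1 hω.2.2.1 hω.2.2.2 φ

end Final

theorem stmt_2 {X : Type*} [NormedAddCommGroup X] [NormedSpace ℝ X] [CompleteSpace X]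
    (hAsp : AsplundCond X) :
    (∀ (f : ℕ → ℝ → X) (g : ℝ → X), (∀ n, AEStronglyMeasurable (f n) μ01) →
      AEStronglyMeasurable g μ01 → ScalarAE f g →
      (WeaklyAE f g ↔ PtwiseBddAE f)) ∧
    (∀ (f : ℕ → ℝ → X) (g : ℝ → X), (∀ n, AEStronglyMeasurable (f n) μ01) →
      AEStronglyMeasurable g μ01 → ScalarAE f g →
      ((∃ φ : ℕ → ℕ, StrictMono φ ∧ WeaklyAE (fun k => f (φ k)) g) ↔
       (∃ φ : ℕ → ℕ, StrictMono φ ∧ PtwiseBddAE (fun k => f (φ k))))) ∧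
    (∀ (f : ℕ → ℝ → X) (g : ℝ → X), (∀ n, AEStronglyMeasurable (f n) μ01) →
      AEStronglyMeasurable g μ01 → ScalarInMeasure f g →
      ((∃ φ : ℕ → ℕ, StrictMono φ ∧ WeaklyAE (fun k => f (φ k)) g) ↔
       (∃ φ : ℕ → ℕ, StrictMono φ ∧ PtwiseBddAE (fun k => f (φ k))))) := by
  refine ⟨?_, ?_, ?_⟩
  · intro f g hf hg hsc
    exact ⟨fun hw => weaklyAE_to_ptwise hw,
      fun hb => weaklyAE_of_ptwise hAsp hf hg hb hsc⟩
  · intro f g hf hg hsc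
    constructor
    · rintro ⟨φ, hφ, hw⟩
      exact ⟨φ, hφ, weaklyAE_to_ptwise hw⟩
    · rintro ⟨φ, hφ, hb⟩
      refine ⟨φ, hφ, weaklyAE_of_ptwise hAsp (fun k => hf (φ k)) hg hb ?_⟩
      intro ψ
      filter_upwards [hsc ψ] with ω hω
      exact hω.comp hφ.tendsto_atTop
  · intro f g hf hg hsm
    constructor
    · rintro ⟨φ, hφ, hw⟩
      exact ⟨φ, hφ, weaklyAE_to_ptwise hw⟩
    · rintro ⟨ψ, hψ, hb⟩
      obtain ⟨Y, hYc, hYs, hmem⟩ := exists_sep_subspace (fun k => hf (ψ k)) hg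
      obtain ⟨Φ, hΦ⟩ := exists_sep_family hAsp Y hYc hYs
      obtain ⟨σ, hσ, hconv⟩ := exists_subseq_ae_of_inMeasure
        (fun k n ω => Φ k (f (ψ n) ω)) (fun k ω => Φ k (g ω))
        (fun k ε hε => (hsm (Φ k) ε hε).comp hψ.tendsto_atTop)
      refine ⟨ψ ∘ σ, hψ.comp hσ, ?_⟩
      refine weaklyAE_of_ptwise_family hΦ ?_ ?_ hconv
      · filter_upwards [hmem] with ω hω
        exact ⟨fun i => hω.1 (σ i), hω.2⟩
      · filter_upwards [hb] with ω hω
        refine BddAbove.mono ?_ hω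
        rintro - ⟨i, rfl⟩
        exact ⟨σ i, rfl⟩
end
end

section
/- Let (f_n) be a sequence in L₀(X) that converges scalarly in L_∞ to the null function, i.e., ‖x*∘f_n‖_{L_∞(μ)} → 0 for every x* ∈ X*. Then (f_n) converges weakly a.e. to the null function: there is a measurable set A with μ(A) = 1 such that x*(f_n(ω)) → 0 for every ω ∈ A and every x* ∈ X*. -/
open MeasureTheory Filter Topology ENNReal Set

noncomputable section

lemma key_essrange {X : Type*} [NormedAddCommGroup X] [NormedSpace ℝ X] (g : ℝ → X) (hg : StronglyMeasurable g) :
    ∃ N : Set ℝ, μ01 N = 0 ∧ ∀ ω ∉ N, ∀ φ : X →L[ℝ] ℝ,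
      (‖φ (g ω)‖₊ : ℝ≥0∞) ≤ eLpNorm (fun ω => φ (g ω)) ⊤ μ01 := by
  obtain ⟨c, hc_count, hc_sub⟩ := hg.isSeparable_range
  set S : Set (X × ℚ) := {p | p.1 ∈ c ∧ 0 < p.2 ∧
    μ01 (g ⁻¹' Metric.ball p.1 (p.2 : ℝ)) = 0} with hS
  have hScount : S.Countable := by
    apply Set.Countable.mono _ (hc_count.prod (Set.countable_univ))
    intro p hp; exact ⟨hp.1, trivial⟩
  refine ⟨⋃ p ∈ S, g ⁻¹' Metric.ball p.1 (p.2 : ℝ), ?_, ?_⟩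
  · exact (measure_biUnion_null_iff hScount).2 fun p hp => hp.2.2
  · intro ω hω φ
    set a := eLpNorm (fun ω => φ (g ω)) ⊤ μ01 with ha
    refine ENNReal.le_of_forall_pos_le_add fun ε hε hlt => ?_
    -- choose rational r with 2 r (‖φ‖+1) < ε
    obtain ⟨r, hr0, hrε⟩ : ∃ r : ℚ, 0 < r ∧ 2 * (r : ℝ) * (‖φ‖ + 1) < ε := by
      obtain ⟨r, hr0, hr⟩ := exists_rat_btwn
        (show (0:ℝ) < ε / (2 * (‖φ‖ + 1)) by positivity)
      refine ⟨r, by exact_mod_cast hr0, ?_⟩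
      have hpos : (0:ℝ) < 2 * (‖φ‖ + 1) := by positivity
      calc 2 * (r : ℝ) * (‖φ‖ + 1) = (r : ℝ) * (2 * (‖φ‖ + 1)) := by ring
        _ < ε / (2 * (‖φ‖ + 1)) * (2 * (‖φ‖ + 1)) := by
            exact mul_lt_mul_of_pos_right hr hpos
        _ = ε := by field_simp
    -- find x in c close to g ω
    have hgω : g ω ∈ closure c := hc_sub ⟨ω, rfl⟩
    obtain ⟨x, hxc, hxd⟩ := Metric.mem_closure_iff.1 hgω (r : ℝ) (by exact_mod_cast hr0)
    have hωball : ω ∈ g ⁻¹' Metric.ball x (r : ℝ) := by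
      simp only [Set.mem_preimage, Metric.mem_ball]
      exact hxd
    -- the ball preimage has positive measure
    have hpos : μ01 (g ⁻¹' Metric.ball x (r : ℝ)) ≠ 0 := by
      intro h0
      exact hω (Set.mem_biUnion (show (⟨x, r⟩ : X × ℚ) ∈ S from ⟨hxc, hr0, h0⟩) hωball)
    -- ae bound
    have hae : ∀ᵐ ω' ∂μ01, (‖φ (g ω')‖₊ : ℝ≥0∞) ≤ a := by
      rw [ha, eLpNorm_exponent_top]
      exact enorm_ae_le_eLpNormEssSup _ _
    -- find a point in the ball preimage with the bound
    have hne : (g ⁻¹' Metric.ball x (r : ℝ) ∩ {ω' | (‖φ (g ω')‖₊ : ℝ≥0∞) ≤ a}).Nonempty := by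
      by_contra hcon
      rw [Set.not_nonempty_iff_eq_empty] at hcon
      have hsub : g ⁻¹' Metric.ball x (r : ℝ) ⊆ {ω' | (‖φ (g ω')‖₊ : ℝ≥0∞) ≤ a}ᶜ := by
        intro y hy
        intro hy2
        exact Set.eq_empty_iff_forall_notMem.1 hcon y ⟨hy, hy2⟩
      have : μ01 {ω' | (‖φ (g ω')‖₊ : ℝ≥0∞) ≤ a}ᶜ = 0 := by
        rw [Set.compl_setOf]; exact ae_iff.1 hae
      exact hpos (measure_mono_null hsub this)
    obtain ⟨ω', hω'ball, hω'le⟩ := hne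
    -- now estimate
    have hdist : ‖g ω - g ω'‖ < 2 * (r : ℝ) := by
      have h1 : dist (g ω) x < r := hxd
      have h2 : dist (g ω') x < r := hω'ball
      calc ‖g ω - g ω'‖ = dist (g ω) (g ω') := (dist_eq_norm _ _).symm
        _ ≤ dist (g ω) x + dist x (g ω') := dist_triangle _ _ _
        _ = dist (g ω) x + dist (g ω') x := by rw [dist_comm x]
        _ < 2 * r := by linarith
    have hreal : ‖φ (g ω)‖ ≤ ‖φ (g ω')‖ + (ε : ℝ) := by
      have : ‖φ (g ω) - φ (g ω')‖ ≤ ‖φ‖ * ‖g ω - g ω'‖ := by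
        rw [← map_sub]; exact φ.le_opNorm _
      have h2 : ‖φ‖ * ‖g ω - g ω'‖ ≤ ‖φ‖ * (2 * r) := by
        exact mul_le_mul_of_nonneg_left hdist.le (norm_nonneg _)
      have h3 : ‖φ‖ * (2 * r) ≤ (ε : ℝ) := by
        have : 2 * (r:ℝ) * (‖φ‖ + 1) < ε := hrε
        nlinarith [norm_nonneg φ, hr0, show (0:ℝ) < r by exact_mod_cast hr0]
      calc ‖φ (g ω)‖ ≤ ‖φ (g ω')‖ + ‖φ (g ω) - φ (g ω')‖ := by
            have := norm_sub_norm_le (φ (g ω)) (φ (g ω'))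
            linarith [abs_le.1 (abs_norm_sub_norm_le (φ (g ω)) (φ (g ω')))]
        _ ≤ ‖φ (g ω')‖ + ε := by linarith
    -- convert to ℝ≥0∞
    calc (‖φ (g ω)‖₊ : ℝ≥0∞) ≤ (‖φ (g ω')‖₊ : ℝ≥0∞) + (ε : ℝ≥0∞) := by
          rw [← ENNReal.coe_add]
          apply ENNReal.coe_le_coe.2
          have : ‖φ (g ω)‖₊ ≤ ‖φ (g ω')‖₊ + ε := by
            rw [← NNReal.coe_le_coe]
            push_cast
            simpa [coe_nnnorm] using hreal
          exact this
      _ ≤ a + ε := by exact add_le_add (show (‖φ (g ω')‖₊ : ℝ≥0∞) ≤ a from hω'le) le_rfl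

theorem stmt_4 {X : Type*} [NormedAddCommGroup X] [NormedSpace ℝ X] [CompleteSpace X]
    (f : ℕ → ℝ → X) (hf : ∀ n, AEStronglyMeasurable (f n) μ01)
    (h : ∀ φ : X →L[ℝ] ℝ,
      Tendsto (fun n => eLpNorm (fun ω => φ (f n ω)) ⊤ μ01) atTop (𝓝 0)) :
    WeaklyAE f (0 : ℝ → X) := by

  set g : ℕ → ℝ → X := fun n => (hf n).mk (f n) with hg
  have hgm : ∀ n, StronglyMeasurable (g n) := fun n => (hf n).stronglyMeasurable_mk
  have hfg : ∀ n, f n =ᵐ[μ01] g n := fun n => (hf n).ae_eq_mk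
  choose N hN0 hNle using fun n => key_essrange (g n) (hgm n)
  -- the set where f n = g n for all n
  set E : ℕ → Set ℝ := fun n => {ω | f n ω ≠ g n ω} with hE
  have hE0 : ∀ n, μ01 (E n) = 0 := fun n => ae_iff.1 (hfg n)
  set Bad : Set ℝ := (⋃ n, N n) ∪ (⋃ n, E n) with hBad
  have hBad0 : μ01 Bad = 0 := by
    rw [hBad, measure_union_null_iff]
    constructor <;> rw [measure_iUnion_null_iff]
    · exact hN0
    · exact hE0
  refine ⟨(toMeasurable μ01 Bad)ᶜ, (measurableSet_toMeasurable _ _).compl, ?_, ?_⟩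
  · have h1 : μ01 (toMeasurable μ01 Bad) = 0 := by
      rw [measure_toMeasurable]; exact hBad0
    rw [measure_compl (measurableSet_toMeasurable _ _) (by rw [h1]; exact ENNReal.zero_ne_top)]
    rw [h1]
    have : μ01 Set.univ = 1 := by
      rw [μ01, Measure.restrict_apply_univ, Real.volume_Icc]
      norm_num
    rw [this]; simp
  · intro ω hω φ
    have hωBad : ω ∉ Bad := fun hh => hω (subset_toMeasurable _ _ hh)
    have hωN : ∀ n, ω ∉ N n := fun n hn => hωBad (Or.inl (Set.mem_iUnion.2 ⟨n, hn⟩))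
    have hωE : ∀ n, f n ω = g n ω := fun n => by
      by_contra hne
      exact hωBad (Or.inr (Set.mem_iUnion.2 ⟨n, hne⟩))
    have hbound : ∀ n, (‖φ (f n ω)‖₊ : ℝ≥0∞) ≤ eLpNorm (fun ω => φ (f n ω)) ⊤ μ01 := by
      intro n
      have := hNle n ω (hωN n) φ
      rw [hωE n]
      calc (‖φ (g n ω)‖₊ : ℝ≥0∞) ≤ eLpNorm (fun ω => φ (g n ω)) ⊤ μ01 := this
        _ = eLpNorm (fun ω => φ (f n ω)) ⊤ μ01 := by
            apply eLpNorm_congr_ae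
            filter_upwards [hfg n] with ω' hω'
            rw [hω']
    have hsq : Tendsto (fun n => (‖φ (f n ω)‖₊ : ℝ≥0∞)) atTop (𝓝 0) :=
      tendsto_of_tendsto_of_tendsto_of_le_of_le tendsto_const_nhds (h φ)
        (fun n => zero_le) hbound
    have hnn : Tendsto (fun n => ‖φ (f n ω)‖₊) atTop (𝓝 (0 : NNReal)) := by
      rw [← ENNReal.coe_zero] at hsq
      exact ENNReal.tendsto_coe.1 hsq
    have hnorm : Tendsto (fun n => ‖φ (f n ω)‖) atTop (𝓝 0) := by
      have := NNReal.tendsto_coe.2 hnn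
      simpa [coe_nnnorm] using this
    have : Tendsto (fun n => φ (f n ω)) atTop (𝓝 0) :=
      tendsto_zero_iff_norm_tendsto_zero.2 hnorm
    simpa using this
end
end

section
/- Let K be a subset of the real Banach space X that is compact in the weak topology of X, and let (f_n) be a sequence in L₀(X) such that for each n, f_n(ω) ∈ K for μ-a.e. ω. If (f_n) converges scalarly in measure to f ∈ L₀(X), then some subsequence (f_{n_k}) converges weakly a.e. to f; in particular f(ω) ∈ K for μ-a.e. ω. -/
open MeasureTheory Filter Topology ENNReal Set

noncomputable section

section AuxLemmas

variable {X : Type*} [NormedAddCommGroup X] [NormedSpace ℝ X]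

lemma weak_eval_cont (φ : X →L[ℝ] ℝ) :
    Continuous fun z : WeakSpace ℝ X => φ ((toWeakSpace ℝ X).symm z) :=
  WeakBilin.eval_continuous ((topDualPairing ℝ X).flip) φ

lemma clusterPt_eq_of_sep (S : Submodule ℝ X)
    (hScl : IsClosed (S : Set X)) (ψ : ℕ → X →L[ℝ] ℝ)
    (hsep : ∀ y ∈ S, ∀ b ∈ S, (∀ i, ψ i y = ψ i b) → y = b)
    (x : ℕ → X) (b : X) (hb : b ∈ S) (hxS : ∀ k, x k ∈ S)
    (hψ : ∀ i, Tendsto (fun k => ψ i (x k)) atTop (𝓝 (ψ i b)))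
    (y : WeakSpace ℝ X)
    (hy : ClusterPt y (Filter.map (fun k => toWeakSpace ℝ X (x k)) atTop)) :
    y = toWeakSpace ℝ X b := by
  set F := Filter.map (fun k => toWeakSpace ℝ X (x k)) atTop with hFdef
  have hWclosed : IsClosed (toWeakSpace ℝ X '' (S : Set X)) := by
    have h1 : toWeakSpace ℝ X '' closure (S : Set X) = closure (toWeakSpace ℝ X '' (S : Set X)) :=
      (S.convex).toWeakSpace_closure ℝ
    rw [hScl.closure_eq] at h1
    rw [h1]; exact isClosed_closure
  have hyW : y ∈ toWeakSpace ℝ X '' (S : Set X) := by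
    have hle : F ≤ 𝓟 (toWeakSpace ℝ X '' (S : Set X)) :=
      le_principal_iff.mpr (Filter.eventually_map.mpr (Filter.Eventually.of_forall fun k => ⟨x k, hxS k, rfl⟩))
    have h2 := mem_closure_iff_clusterPt.mpr (hy.mono hle)
    rwa [hWclosed.closure_eq] at h2
  obtain ⟨y', hy'S, rfl⟩ := hyW
  have heval : ∀ i, ψ i y' = ψ i b := by
    intro i
    have hcont : Continuous fun z : WeakSpace ℝ X => (ψ i) ((toWeakSpace ℝ X).symm z) :=
      weak_eval_cont (ψ i)
    have hcl : ClusterPt ((ψ i) ((toWeakSpace ℝ X).symm (toWeakSpace ℝ X y')))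
        (Filter.map (fun z : WeakSpace ℝ X => (ψ i) ((toWeakSpace ℝ X).symm z)) F) :=
      hy.map hcont.continuousAt Filter.tendsto_map
    rw [LinearEquiv.symm_apply_apply] at hcl
    have hmap : Filter.map (fun z : WeakSpace ℝ X => (ψ i) ((toWeakSpace ℝ X).symm z)) F
        = Filter.map (fun k => ψ i (x k)) atTop := by
      rw [hFdef, Filter.map_map]; rfl
    rw [hmap] at hcl
    exact eq_of_nhds_neBot (hcl.mono (hψ i))
  have hyb : y' = b := hsep y' hy'S b hb heval
  rw [hyb]

lemma key_tendsto {K : Set X} (hK : IsCompact (toWeakSpace ℝ X '' K)) (S : Submodule ℝ X)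
    (hScl : IsClosed (S : Set X)) (ψ : ℕ → X →L[ℝ] ℝ)
    (hsep : ∀ y ∈ S, ∀ b ∈ S, (∀ i, ψ i y = ψ i b) → y = b)
    (x : ℕ → X) (b : X) (hb : b ∈ S) (hxK : ∀ k, x k ∈ K) (hxS : ∀ k, x k ∈ S)
    (hψ : ∀ i, Tendsto (fun k => ψ i (x k)) atTop (𝓝 (ψ i b))) :
    (∀ φ : X →L[ℝ] ℝ, Tendsto (fun k => φ (x k)) atTop (𝓝 (φ b))) ∧ b ∈ K := by
  constructor
  · intro φ
    by_contra hcon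
    rw [Metric.tendsto_atTop] at hcon
    push_neg at hcon
    obtain ⟨ε, hε, hfreq⟩ := hcon
    obtain ⟨u, hu, hud⟩ := Filter.extraction_of_frequently_atTop
      (Filter.frequently_atTop.mpr hfreq)
    set F := Filter.map (fun j => toWeakSpace ℝ X (x (u j))) atTop with hFdef
    haveI hne : F.NeBot := Filter.map_neBot
    have hleK : F ≤ 𝓟 (toWeakSpace ℝ X '' K) :=
      le_principal_iff.mpr (Filter.eventually_map.mpr (Filter.Eventually.of_forall fun j => ⟨x (u j), hxK _, rfl⟩))
    obtain ⟨y, hyK, hycl⟩ := hK.exists_clusterPt hleK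
    have hyb : y = toWeakSpace ℝ X b :=
      clusterPt_eq_of_sep S hScl ψ hsep (fun j => x (u j)) b hb (fun j => hxS _)
        (fun i => (hψ i).comp hu.tendsto_atTop) y hycl
    have hCclosed : IsClosed {z : WeakSpace ℝ X | ε ≤ dist (φ ((toWeakSpace ℝ X).symm z)) (φ b)} :=
      isClosed_le continuous_const ((weak_eval_cont φ).dist continuous_const)
    have hleC : F ≤ 𝓟 {z : WeakSpace ℝ X | ε ≤ dist (φ ((toWeakSpace ℝ X).symm z)) (φ b)} :=
      le_principal_iff.mpr (Filter.eventually_map.mpr (Filter.Eventually.of_forall fun j => by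
        simpa using hud j))
    have hyC : y ∈ {z : WeakSpace ℝ X | ε ≤ dist (φ ((toWeakSpace ℝ X).symm z)) (φ b)} := by
      have h2 := mem_closure_iff_clusterPt.mpr (hycl.mono hleC)
      rwa [hCclosed.closure_eq] at h2
    rw [hyb] at hyC
    simp only [Set.mem_setOf_eq, LinearEquiv.symm_apply_apply, dist_self] at hyC
    linarith
  · haveI hne : (Filter.map (fun k => toWeakSpace ℝ X (x k)) atTop).NeBot := Filter.map_neBot
    have hleK : Filter.map (fun k => toWeakSpace ℝ X (x k)) atTop ≤ 𝓟 (toWeakSpace ℝ X '' K) :=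
      le_principal_iff.mpr (Filter.eventually_map.mpr (Filter.Eventually.of_forall fun k => ⟨x k, hxK _, rfl⟩))
    obtain ⟨y, hyK, hycl⟩ := hK.exists_clusterPt hleK
    have hyb := clusterPt_eq_of_sep S hScl ψ hsep x b hb hxS hψ y hycl
    rw [hyb] at hyK
    obtain ⟨p, hpK, hp⟩ := hyK
    have hpb : p = b := (toWeakSpace ℝ X).injective hp
    rwa [← hpb]

lemma exists_sep_family_s5 {S : Set X} (hS : TopologicalSpace.IsSeparable S) :
    ∃ ψ : ℕ → X →L[ℝ] ℝ, ∀ z ∈ S, z ≠ 0 → ∃ i, ψ i z ≠ 0 := by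
  obtain ⟨c, hc_count, hc_sub⟩ := hS
  obtain ⟨e, he⟩ := (hc_count.insert 0).exists_eq_range (Set.insert_nonempty 0 c)
  have hnorm : ∀ w : X, ∃ φ : X →L[ℝ] ℝ, ‖φ‖ ≤ 1 ∧ φ w = ‖w‖ := by
    intro w
    obtain ⟨φ, h1, h2⟩ := exists_dual_vector'' ℝ w
    exact ⟨φ, h1, by simpa using h2⟩
  choose ψ hψ1 hψ2 using fun i => hnorm (e i)
  refine ⟨ψ, fun z hz hz0 => ?_⟩
  have hznorm : (0:ℝ) < ‖z‖ := norm_pos_iff.mpr hz0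
  have hzc : z ∈ closure (insert 0 c) := closure_mono (Set.subset_insert 0 c) (hc_sub hz)
  obtain ⟨w, hwc, hwd⟩ := Metric.mem_closure_iff.mp hzc (‖z‖/2) (by linarith)
  obtain ⟨i, rfl⟩ : ∃ i, e i = w := by rw [he] at hwc; exact hwc
  refine ⟨i, fun h0 => ?_⟩
  have h1 : |ψ i z - ψ i (e i)| ≤ ‖z - e i‖ := by
    rw [← map_sub]
    calc |ψ i (z - e i)| ≤ ‖ψ i‖ * ‖z - e i‖ := (ψ i).le_opNorm _
    _ ≤ 1 * ‖z - e i‖ := mul_le_mul_of_nonneg_right (hψ1 i) (norm_nonneg _)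
    _ = ‖z - e i‖ := one_mul _
  rw [h0, hψ2 i, zero_sub, abs_neg, abs_of_nonneg (norm_nonneg _)] at h1
  have hd : ‖z - e i‖ < ‖z‖/2 := by rwa [dist_eq_norm] at hwd
  have h2 : ‖z‖ - ‖e i‖ ≤ ‖z - e i‖ := norm_sub_norm_le z (e i)
  linarith

lemma exists_subseq_tendsto_ae (ψ : ℕ → X →L[ℝ] ℝ) (f : ℕ → ℝ → X) (g : ℝ → X)
    (hconv : ∀ i : ℕ, TendstoInMeasure μ01 (fun n ω => ψ i (f n ω)) atTop (fun ω => ψ i (g ω))) :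
    ∃ n : ℕ → ℕ, StrictMono n ∧ ∀ i : ℕ, ∀ᵐ ω ∂μ01,
      Tendsto (fun k => ψ i (f (n k) ω)) atTop (𝓝 (ψ i (g ω))) := by
  have step : ∀ k N : ℕ, ∃ m : ℕ, N < m ∧ ∀ i ≤ k,
      μ01 {ω | (2:ℝ)⁻¹ ^ k ≤ dist (ψ i (f m ω)) (ψ i (g ω))} ≤ (2:ℝ≥0∞)⁻¹ ^ k := by
    intro k N
    have hpos : (0:ℝ) < (2:ℝ)⁻¹ ^ k := by positivity
    have hev : ∀ᶠ m in atTop, ∀ i ∈ Set.Iic k,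
        μ01 {ω | (2:ℝ)⁻¹ ^ k ≤ dist (ψ i (f m ω)) (ψ i (g ω))} ≤ (2:ℝ≥0∞)⁻¹ ^ k := by
      rw [Filter.eventually_all_finite (Set.finite_Iic k)]
      intro i _
      have h0 : (0:ℝ≥0∞) < (2:ℝ≥0∞)⁻¹ ^ k :=
        pos_iff_ne_zero.mpr (pow_ne_zero _ (ENNReal.inv_ne_zero.mpr (by norm_num)))
      exact ((tendstoInMeasure_iff_dist.mp (hconv i) _ hpos).eventually_lt_const h0).mono fun m hm => hm.le
    obtain ⟨m, hm⟩ := ((eventually_gt_atTop N).and hev).exists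
    exact ⟨m, hm.1, fun i hi => hm.2 i hi⟩
  choose! m hm1 hm2 using step
  let n : ℕ → ℕ := fun k => Nat.rec (m 0 0) (fun k ih => m (k+1) ih) k
  have hmono : StrictMono n := strictMono_nat_of_lt_succ fun k => hm1 (k+1) (n k)
  have hbound : ∀ k, ∀ i ≤ k,
      μ01 {ω | (2:ℝ)⁻¹ ^ k ≤ dist (ψ i (f (n k) ω)) (ψ i (g ω))} ≤ (2:ℝ≥0∞)⁻¹ ^ k := by
    intro k
    cases k with
    | zero => exact hm2 0 0
    | succ k => exact hm2 (k+1) (n k)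
  refine ⟨n, hmono, fun i => ?_⟩
  have hsum : (∑' k : ℕ,
      μ01 {ω | (2:ℝ)⁻¹ ^ (k+i) ≤ dist (ψ i (f (n (k+i)) ω)) (ψ i (g ω))}) ≠ ∞ := by
    have hle : ∀ k : ℕ,
        μ01 {ω | (2:ℝ)⁻¹ ^ (k+i) ≤ dist (ψ i (f (n (k+i)) ω)) (ψ i (g ω))} ≤ (2:ℝ≥0∞)⁻¹ ^ k := by
      intro k
      calc μ01 _ ≤ (2:ℝ≥0∞)⁻¹ ^ (k+i) := hbound (k+i) i (Nat.le_add_left i k)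
      _ ≤ (2:ℝ≥0∞)⁻¹ ^ k :=
        pow_le_pow_of_le_one zero_le (ENNReal.inv_le_one.mpr one_le_two) (Nat.le_add_right k i)
    refine ne_top_of_le_ne_top ?_ (ENNReal.tsum_le_tsum hle)
    rw [ENNReal.tsum_geometric, ENNReal.one_sub_inv_two, inv_inv]
    exact ENNReal.ofNat_ne_top
  have hae := MeasureTheory.ae_eventually_notMem hsum
  filter_upwards [hae] with ω hω
  rw [Filter.eventually_atTop] at hω
  obtain ⟨N, hN⟩ := hω
  rw [tendsto_iff_dist_tendsto_zero]
  refine squeeze_zero' (Filter.Eventually.of_forall fun k => dist_nonneg) ?_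
    (tendsto_pow_atTop_nhds_zero_of_lt_one (by norm_num) (by norm_num : (2:ℝ)⁻¹ < 1))
  refine Filter.eventually_atTop.mpr ⟨N + i, fun k hk => ?_⟩
  have h1 : k - i + i = k := Nat.sub_add_cancel (le_trans (Nat.le_add_left i N) hk)
  have h2 := hN (k - i) (by omega)
  rw [h1] at h2
  exact (not_le.mp h2).le

end AuxLemmas

theorem stmt_5 {X : Type*} [NormedAddCommGroup X] [NormedSpace ℝ X] [CompleteSpace X]
    (K : Set X) (hK : IsCompact (toWeakSpace ℝ X '' K))
    (f : ℕ → ℝ → X) (g : ℝ → X) (hf : ∀ n, AEStronglyMeasurable (f n) μ01)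
    (hg : AEStronglyMeasurable g μ01)
    (hfK : ∀ n, ∀ᵐ ω ∂μ01, f n ω ∈ K)
    (hconv : ScalarInMeasure f g) :
    (∃ φ : ℕ → ℕ, StrictMono φ ∧ WeaklyAE (fun k => f (φ k)) g) ∧
    (∀ᵐ ω ∂μ01, g ω ∈ K) := by
  classical
  choose T hT1 hT2 using fun n => (hf n).isSeparable_ae_range
  obtain ⟨tg, htg1, htg2⟩ := hg.isSeparable_ae_range
  set t : Set X := (⋃ n, T n) ∪ tg with ht
  have htsep : TopologicalSpace.IsSeparable t :=
    (TopologicalSpace.IsSeparable.iUnion hT1).union htg1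
  set S : Submodule ℝ X := (Submodule.span ℝ t).topologicalClosure with hS
  have hScl : IsClosed (S : Set X) := Submodule.isClosed_topologicalClosure _
  have hSsep : TopologicalSpace.IsSeparable (S : Set X) := by
    have h1 : TopologicalSpace.IsSeparable (Submodule.span ℝ t : Set X) := htsep.span
    rw [hS, Submodule.topologicalClosure_coe]
    exact h1.closure
  obtain ⟨ψ, hψsep0⟩ := exists_sep_family_s5 hSsep
  have hsep : ∀ y ∈ S, ∀ b ∈ S, (∀ i, ψ i y = ψ i b) → y = b := by
    intro y hy b hb h
    by_contra hne
    obtain ⟨i, hi⟩ := hψsep0 (y - b) (S.sub_mem hy hb) (sub_ne_zero.mpr hne)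
    exact hi (by rw [map_sub, h i, sub_self])
  obtain ⟨n, hmono, hae⟩ := exists_subseq_tendsto_ae ψ f g (fun i => hconv (ψ i))
  have htS : t ⊆ (S : Set X) := fun x hx =>
    Submodule.le_topologicalClosure _ (Submodule.subset_span hx)
  have hQ : ∀ᵐ ω ∂μ01,
      (∀ φ : X →L[ℝ] ℝ, Tendsto (fun k => φ (f (n k) ω)) atTop (𝓝 (φ (g ω)))) ∧ g ω ∈ K := by
    have h1 : ∀ᵐ ω ∂μ01, ∀ i, Tendsto (fun k => ψ i (f (n k) ω)) atTop (𝓝 (ψ i (g ω))) :=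
      ae_all_iff.mpr hae
    have h2 : ∀ᵐ ω ∂μ01, ∀ m, f m ω ∈ K := ae_all_iff.mpr hfK
    have h3 : ∀ᵐ ω ∂μ01, ∀ m, f m ω ∈ t := ae_all_iff.mpr
      (fun m => (hT2 m).mono fun ω h => Or.inl (Set.mem_iUnion.mpr ⟨m, h⟩))
    have h4 : ∀ᵐ ω ∂μ01, g ω ∈ t := htg2.mono fun ω h => Or.inr h
    filter_upwards [h1, h2, h3, h4] with ω hω1 hω2 hω3 hω4
    exact key_tendsto hK S hScl ψ hsep (fun k => f (n k) ω) (g ω) (htS hω4)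
      (fun k => hω2 (n k)) (fun k => htS (hω3 (n k))) hω1
  refine ⟨⟨n, hmono, ?_⟩, hQ.mono fun ω h => h.2⟩
  obtain ⟨N, hsub, hNmeas, hN0⟩ := exists_measurable_superset_of_null (ae_iff.mp hQ)
  have huniv : μ01 Set.univ = 1 := by
    simp [μ01, Measure.restrict_apply_univ, Real.volume_Icc]
  refine ⟨Nᶜ, hNmeas.compl, ?_, ?_⟩
  · rw [measure_compl hNmeas (by rw [hN0]; exact ENNReal.zero_ne_top), hN0, tsub_zero, huniv]
  · intro ω hω φ
    have hP : ¬ ¬ ((∀ φ : X →L[ℝ] ℝ,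
        Tendsto (fun k => φ (f (n k) ω)) atTop (𝓝 (φ (g ω)))) ∧ g ω ∈ K) :=
      fun h => hω (hsub h)
    exact (not_not.mp hP).1 φ
end
end

section
/- Let K be a subset of the real Banach space X that is compact in the weak topology of X, and let (f_n) be a sequence in L₀(X) such that for each n, f_n(ω) ∈ K for μ-a.e. ω. If (f_n) converges scalarly a.e. to f ∈ L₀(X), then (f_n) converges weakly a.e. to f. -/
open MeasureTheory Filter Topology ENNReal Set

noncomputable section

/-- Countable separating family of functionals on a separable set. -/
lemma sep_family' {X : Type*} [NormedAddCommGroup X] [NormedSpace ℝ X]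
    (s : Set X) (hs : TopologicalSpace.IsSeparable s) :
    ∃ φ : ℕ → (X →L[ℝ] ℝ), ∀ v ∈ s, (∀ k, φ k v = 0) → v = 0 := by
  obtain ⟨c, hc, hsc⟩ := hs
  have hc' : (c ∪ {0} : Set X).Countable := hc.union (countable_singleton 0)
  have hne : (c ∪ {0} : Set X).Nonempty := ⟨0, Or.inr rfl⟩
  obtain ⟨e, he⟩ := Set.Countable.exists_eq_range hc' hne
  classical
  choose φ hφ1 hφ2 using fun (x : X) (hx : x ≠ 0) => exists_dual_vector ℝ x (norm_ne_zero_iff.mpr hx)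
  refine ⟨fun k => if h : e k ≠ 0 then φ (e k) h else 0, fun v hv h0 => ?_⟩
  by_contra hvne
  have hvpos : 0 < ‖v‖ := norm_pos_iff.mpr hvne
  have hvc : v ∈ closure (c ∪ {0} : Set X) :=
    closure_mono Set.subset_union_left (hsc hv)
  obtain ⟨y, hy, hdy⟩ := Metric.mem_closure_iff.mp hvc (‖v‖ / 3) (by linarith)
  rw [he] at hy
  obtain ⟨k, rfl⟩ := hy
  have hdy' : ‖v - e k‖ < ‖v‖ / 3 := by rwa [dist_eq_norm] at hdy
  have hek : 2 * ‖v‖ / 3 < ‖e k‖ := by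
    have := norm_sub_norm_le v (e k)
    linarith
  have hekne : e k ≠ 0 := by
    intro h; rw [h, norm_zero] at hek; linarith
  have hval : (φ (e k) hekne) v = 0 := by
    have := h0 k; simp only [dif_pos hekne] at this; exact this
  set ψ := φ (e k) hekne with hψ
  have h1 : ψ (e k) = ‖e k‖ := hφ2 (e k) hekne
  have h2 : |ψ (v - e k)| ≤ ‖v - e k‖ := by
    calc |ψ (v - e k)| ≤ ‖ψ‖ * ‖v - e k‖ := ψ.le_opNorm _
      _ = ‖v - e k‖ := by rw [hφ1 (e k) hekne, one_mul]
  have h3 : ψ v = ψ (e k) + ψ (v - e k) := by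
    rw [← map_add]; congr 1; abel
  have ht : -(‖v‖ / 3) ≤ ψ (v - e k) := by
    have := neg_abs_le (ψ (v - e k)); linarith
  rw [hval, h1] at h3
  linarith

/-- A closed submodule is weakly closed (Mazur). -/
lemma weakly_closed_submodule' {X : Type*} [NormedAddCommGroup X] [NormedSpace ℝ X]
    (Y : Submodule ℝ X) (hY : IsClosed (Y : Set X)) :
    IsClosed (toWeakSpace ℝ X '' (Y : Set X)) := by
  have h := Y.convex.toWeakSpace_closure ℝ
  rw [hY.closure_eq] at h
  rw [h]; exact isClosed_closure

theorem stmt_6 {X : Type*} [NormedAddCommGroup X] [NormedSpace ℝ X] [CompleteSpace X]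
    (K : Set X) (hK : IsCompact (toWeakSpace ℝ X '' K))
    (f : ℕ → ℝ → X) (g : ℝ → X) (hf : ∀ n, AEStronglyMeasurable (f n) μ01)
    (hg : AEStronglyMeasurable g μ01)
    (hfK : ∀ n, ∀ᵐ ω ∂μ01, f n ω ∈ K)
    (hconv : ScalarAE f g) :
    WeaklyAE f g := by
  classical
  -- separable closed subspace containing a.e. all values
  set S : Set X := (⋃ n, Set.range ((hf n).mk (f n))) ∪ Set.range (hg.mk g) with hS
  have hSsep : TopologicalSpace.IsSeparable S :=
    (TopologicalSpace.IsSeparable.iUnion fun n =>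
      ((hf n).stronglyMeasurable_mk).isSeparable_range).union
      hg.stronglyMeasurable_mk.isSeparable_range
  set Y : Submodule ℝ X := (Submodule.span ℝ S).topologicalClosure with hY
  have hYclosed : IsClosed (Y : Set X) := Submodule.isClosed_topologicalClosure _
  have hYsep : TopologicalSpace.IsSeparable (Y : Set X) := hSsep.span.closure
  have hSY : S ⊆ (Y : Set X) :=
    (Submodule.subset_span).trans (Submodule.le_topologicalClosure _)
  obtain ⟨φ, hφsep⟩ := sep_family' (Y : Set X) hYsep
  -- a.e. properties
  have hP : ∀ᵐ ω ∂μ01, (∀ n, f n ω ∈ K) ∧ (∀ n, f n ω ∈ (Y : Set X)) ∧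
      g ω ∈ (Y : Set X) ∧
      ∀ k, Tendsto (fun n => φ k (f n ω)) atTop (𝓝 (φ k (g ω))) := by
    have h1 : ∀ᵐ ω ∂μ01, ∀ n, f n ω ∈ K := ae_all_iff.mpr hfK
    have h2 : ∀ᵐ ω ∂μ01, ∀ n, f n ω ∈ (Y : Set X) := by
      refine ae_all_iff.mpr fun n => ?_
      filter_upwards [(hf n).ae_eq_mk] with ω hω
      rw [hω]
      exact hSY (Or.inl (Set.mem_iUnion.mpr ⟨n, Set.mem_range_self ω⟩))
    have h3 : ∀ᵐ ω ∂μ01, g ω ∈ (Y : Set X) := by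
      filter_upwards [hg.ae_eq_mk] with ω hω
      rw [hω]; exact hSY (Or.inr (Set.mem_range_self ω))
    have h4 : ∀ᵐ ω ∂μ01, ∀ k,
        Tendsto (fun n => φ k (f n ω)) atTop (𝓝 (φ k (g ω))) :=
      ae_all_iff.mpr fun k => hconv (φ k)
    filter_upwards [h1, h2, h3, h4] with ω a b c d
    exact ⟨a, b, c, d⟩
  -- build the measurable full-measure set
  set N : Set ℝ := {ω | ¬ ((∀ n, f n ω ∈ K) ∧ (∀ n, f n ω ∈ (Y : Set X)) ∧
      g ω ∈ (Y : Set X) ∧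
      ∀ k, Tendsto (fun n => φ k (f n ω)) atTop (𝓝 (φ k (g ω))))} with hN
  have hNnull : μ01 N = 0 := hP
  refine ⟨(toMeasurable μ01 N)ᶜ, (measurableSet_toMeasurable _ _).compl, ?_, ?_⟩
  · have h1 : μ01 (toMeasurable μ01 N) = 0 := by
      rw [measure_toMeasurable]; exact hNnull
    have huniv : μ01 Set.univ = 1 := by
      simp [μ01, Measure.restrict_apply_univ, Real.volume_Icc]
    rw [measure_compl (measurableSet_toMeasurable _ _) (by rw [h1]; exact ENNReal.zero_ne_top)]
    rw [h1, tsub_zero, huniv]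
  · intro ω hω ψ
    have hωP : (∀ n, f n ω ∈ K) ∧ (∀ n, f n ω ∈ (Y : Set X)) ∧
        g ω ∈ (Y : Set X) ∧
        ∀ k, Tendsto (fun n => φ k (f n ω)) atTop (𝓝 (φ k (g ω))) := by
      by_contra h
      exact hω (subset_toMeasurable μ01 N h)
    obtain ⟨hK1, hY1, hY2, hT⟩ := hωP
    -- weak convergence via ultrafilters
    have hw : Tendsto (fun n => toWeakSpace ℝ X (f n ω)) atTop
        (𝓝 (toWeakSpace ℝ X (g ω))) := by
      rw [tendsto_iff_ultrafilter]
      intro u hu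
      set h : ℕ → WeakSpace ℝ X := fun n => toWeakSpace ℝ X (f n ω) with hh
      have hmemK : ↑(u.map h) ≤ 𝓟 (toWeakSpace ℝ X '' K) := by
        refine le_principal_iff.mpr (Filter.mem_map.mpr ?_)
        exact Filter.univ_mem' fun n => ⟨f n ω, hK1 n, rfl⟩
      obtain ⟨z, hzC, hz⟩ := hK.ultrafilter_le_nhds _ hmemK
      have hclosed := weakly_closed_submodule' Y hYclosed
      have hzY : z ∈ toWeakSpace ℝ X '' (Y : Set X) := by
        have hmemY : ↑(u.map h) ≤ 𝓟 (toWeakSpace ℝ X '' (Y : Set X)) := by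
          refine le_principal_iff.mpr (Filter.mem_map.mpr ?_)
          exact Filter.univ_mem' fun n => ⟨f n ω, hY1 n, rfl⟩
        have hcl : ClusterPt z (𝓟 (toWeakSpace ℝ X '' (Y : Set X))) :=
          ClusterPt.mono (⟨Filter.neBot_of_le (le_inf hz le_rfl) |>.ne⟩ : ClusterPt z ↑(u.map h)) hmemY
        rw [← hclosed.closure_eq]
        exact mem_closure_iff_clusterPt.mpr hcl
      obtain ⟨v, hvY, hvz⟩ := hzY
      -- each φ k agrees on v and g ω
      have hφeq : ∀ k, φ k v = φ k (g ω) := by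
        intro k
        have hcont : Continuous fun x : WeakSpace ℝ X => (topDualPairing ℝ X).flip x (φ k) :=
          WeakBilin.eval_continuous ((topDualPairing ℝ X).flip) (φ k)
        have t1 : Tendsto (fun n => φ k (f n ω)) ↑u (𝓝 (φ k v)) := by
          have := (hcont.tendsto z).comp hz
          rw [← hvz] at this
          exact this
        have t2 : Tendsto (fun n => φ k (f n ω)) ↑u (𝓝 (φ k (g ω))) :=
          (hT k).mono_left hu
        exact tendsto_nhds_unique t1 t2
      have hveq : v = g ω := by
        have hsub : v - g ω ∈ (Y : Set X) := Y.sub_mem hvY hY2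
        have h0 := hφsep (v - g ω) hsub fun k => by
          rw [map_sub, hφeq k, sub_self]
        exact sub_eq_zero.mp h0
      rw [← hveq, hvz]
      rwa [Tendsto, ← Ultrafilter.coe_map]
    -- conclude scalar convergence for ψ
    have hcont : Continuous fun x : WeakSpace ℝ X => (topDualPairing ℝ X).flip x ψ :=
      WeakBilin.eval_continuous ((topDualPairing ℝ X).flip) ψ
    exact (hcont.tendsto _).comp hw
end
end

section
/- Let X = C([0,1], ℝ) with the supremum norm. There exists a sequence (f_n) in L₀(X) with ‖f_n(ω)‖_∞ ≤ 1 for μ-a.e. ω and every n (i.e., (f_n) lies in the unit ball of L_∞(X)) such that (f_n) converges scalarly in measure to the null function, yet no subsequence of (f_n) converges scalarly a.e. to the null function. Thus C[0,1] fails property (D_∞). -/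
open MeasureTheory Filter Topology ENNReal Set

noncomputable section

namespace Ctr
open scoped Classical
/-- tent function: 0 off (1/4,1/2), 1 on [5/16,7/16] -/
def Lam (x : ℝ) : ℝ := max 0 (min 1 (min (16*(x - 4⁻¹)) (16*(2⁻¹ - x))))

lemma Lam_nonneg (x : ℝ) : 0 ≤ Lam x := le_max_left _ _
lemma Lam_le_one (x : ℝ) : Lam x ≤ 1 := max_le zero_le_one (min_le_left _ _)
lemma Lam_eq_zero_left {x : ℝ} (h : x ≤ 4⁻¹) : Lam x = 0 := by
  have : 16*(x - 4⁻¹) ≤ 0 := by nlinarith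
  unfold Lam
  have h2 : min 1 (min (16*(x - 4⁻¹)) (16*(2⁻¹ - x))) ≤ 0 :=
    le_trans (min_le_right _ _) (le_trans (min_le_left _ _) this)
  exact max_eq_left h2
lemma Lam_eq_zero_right {x : ℝ} (h : 2⁻¹ ≤ x) : Lam x = 0 := by
  have : 16*(2⁻¹ - x) ≤ 0 := by nlinarith
  unfold Lam
  have h2 : min 1 (min (16*(x - 4⁻¹)) (16*(2⁻¹ - x))) ≤ 0 :=
    le_trans (min_le_right _ _) (le_trans (min_le_right _ _) this)
  exact max_eq_left h2
lemma Lam_eq_one {x : ℝ} (h1 : 5/16 ≤ x) (h2 : x ≤ 7/16) : Lam x = 1 := by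
  have a1 : (1:ℝ) ≤ 16*(x - 4⁻¹) := by nlinarith
  have a2 : (1:ℝ) ≤ 16*(2⁻¹ - x) := by nlinarith
  unfold Lam
  rw [min_eq_left (le_min a1 a2), max_eq_right zero_le_one]
lemma Lam_pos {x : ℝ} (h : 0 < Lam x) : 4⁻¹ < x ∧ x < 2⁻¹ := by
  constructor
  · by_contra hc; push_neg at hc; rw [Lam_eq_zero_left hc] at h; exact lt_irrefl _ h
  · by_contra hc; push_neg at hc; rw [Lam_eq_zero_right hc] at h; exact lt_irrefl _ h
lemma Lam_continuous : Continuous Lam := by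
  unfold Lam; fun_prop

lemma cont_Lam_fract : Continuous fun y : ℝ => Lam (Int.fract y) := by
  have : ContinuousOn Lam (Set.Icc 0 1) := Lam_continuous.continuousOn
  have h01 : Lam 0 = Lam 1 := by
    rw [Lam_eq_zero_left (by norm_num), Lam_eq_zero_right (by norm_num)]
  exact this.comp_fract'' h01

/-- the n-th "digit-1 bump" of t -/
def gam (n : ℕ) (t : ℝ) : ℝ := Lam (Int.fract (4^n * t))

lemma gam_nonneg (n t) : 0 ≤ gam n t := Lam_nonneg _
lemma gam_le_one (n t) : gam n t ≤ 1 := Lam_le_one _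
lemma cont_gam (n : ℕ) : Continuous (gam n) :=
  cont_Lam_fract.comp (continuous_const.mul continuous_id)

/-- n-th digit of t is in "active" range -/
def act (n : ℕ) (t : ℝ) : Prop := Int.fract (4^n * t) ∈ Ico (4⁻¹:ℝ) 2⁻¹

lemma act_of_gam_pos {n t} (h : 0 < gam n t) : act n t := by
  obtain ⟨h1, h2⟩ := Lam_pos h
  exact ⟨le_of_lt h1, h2⟩

/-- count of active digits among 0..n -/
def cnt (n : ℕ) (t : ℝ) : ℕ := ((Finset.range (n+1)).filter (fun m => act m t)).card

lemma cnt_le (n t) : cnt n t ≤ n + 1 :=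
  le_trans (Finset.card_filter_le _ _) (by simp)

lemma cnt_lt_cnt {n n' : ℕ} {t : ℝ} (hn : n < n') (ha : act n t) (ha' : act n' t) :
    cnt n t < cnt n' t := by
  classical
  apply Finset.card_lt_card
  constructor
  · apply Finset.filter_subset_filter
    -- range mono
    exact Finset.range_subset_range.2 (by omega)
  · intro hsub
    have : n' ∈ (Finset.range (n+1)).filter (fun m => act m t) := by
      apply hsub; simp [Finset.mem_filter, ha']
    simp [Finset.mem_filter, Finset.mem_range] at this
    omega


lemma continuousAt_fract {x : ℝ} (h : Int.fract x ≠ 0) : ContinuousAt Int.fract x := by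
  have hlt : (⌊x⌋:ℝ) < x := by
    rcases lt_or_eq_of_le (Int.floor_le x) with h' | h'
    · exact h'
    · exfalso; apply h; rw [Int.fract, ← h']; simp
  have hev : Int.fract =ᶠ[𝓝 x] (fun y => y - (⌊x⌋:ℝ)) := by
    filter_upwards [Ioo_mem_nhds hlt (Int.lt_floor_add_one x)] with y hy
    rw [Int.fract, Int.floor_eq_iff.2 ⟨le_of_lt hy.1, by exact_mod_cast hy.2⟩]
  exact ((continuous_id.sub continuous_const).continuousAt).congr hev.symm

lemma fract_ne_boundary {m n : ℕ} {t : ℝ} (hmn : m ≤ n) (h : 0 < gam n t) :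
    Int.fract (4^m*t) ≠ 0 ∧ Int.fract (4^m*t) ≠ 4⁻¹ ∧ Int.fract (4^m*t) ≠ 2⁻¹ := by
  obtain ⟨h1, h2⟩ := Lam_pos h
  rcases eq_or_lt_of_le hmn with rfl | hlt
  · refine ⟨?_, ?_, ?_⟩ <;> intro hc <;> rw [hc] at h1 h2 <;> linarith
  · have key : ∀ c : ℝ, Int.fract (4^m*t) = c → (∃ e : ℤ, 4^(n-m) * c = e) → False := by
      intro c hc he'
      obtain ⟨e, he⟩ := he'
      obtain ⟨z, hz⟩ : ∃ z : ℤ, (4:ℝ)^m*t = (z:ℝ) + c :=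
        ⟨⌊(4:ℝ)^m*t⌋, by rw [← hc]; exact (Int.floor_add_fract _).symm⟩
      have hfr : (4:ℝ)^n * t = ((4^(n-m) * z + e : ℤ) : ℝ) := by
        have h4 : (4:ℝ)^n = 4^(n-m) * 4^m := by rw [← pow_add]; congr 1; omega
        push_cast
        rw [h4, mul_assoc, hz, ← he]; ring
      rw [hfr, Int.fract_intCast] at h1
      norm_num at h1
    have hd : 1 ≤ n - m := by omega
    refine ⟨?_, ?_, ?_⟩ <;> intro hc
    · exact key 0 hc ⟨0, by norm_num⟩
    · refine key 4⁻¹ hc ⟨4^(n-m-1), ?_⟩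
      have h4 : (4:ℝ)^(n-m) = 4^(n-m-1) * 4 := by rw [← pow_succ]; congr 1; omega
      rw [h4]; push_cast; ring
    · refine key 2⁻¹ hc ⟨2*4^(n-m-1), ?_⟩
      have h4 : (4:ℝ)^(n-m) = 4^(n-m-1) * 4 := by rw [← pow_succ]; congr 1; omega
      rw [h4]; push_cast; ring

lemma eventually_act {m : ℕ} {t₀ : ℝ} (h0 : Int.fract (4^m*t₀) ≠ 0)
    (h14 : Int.fract (4^m*t₀) ≠ 4⁻¹) (h12 : Int.fract (4^m*t₀) ≠ 2⁻¹) :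
    ∀ᶠ t in 𝓝 t₀, (act m t ↔ act m t₀) := by
  have hF : ContinuousAt (fun t => Int.fract ((4:ℝ)^m*t)) t₀ :=
    (continuousAt_fract h0).comp ((continuous_const.mul continuous_id).continuousAt)
  by_cases ha : act m t₀
  · have hmem : Int.fract ((4:ℝ)^m*t₀) ∈ Ioo (4⁻¹:ℝ) 2⁻¹ := by
      rcases ha with ⟨ha1, ha2⟩
      exact ⟨lt_of_le_of_ne ha1 (Ne.symm h14), ha2⟩
    filter_upwards [hF (Ioo_mem_nhds hmem.1 hmem.2)] with t ht
    simp only [Set.mem_preimage] at ht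
    exact iff_of_true ⟨le_of_lt ht.1, ht.2⟩ ha
  · have hmem : Int.fract ((4:ℝ)^m*t₀) ∈ Iio (4⁻¹:ℝ) ∪ Ioi 2⁻¹ := by
      by_contra hc
      simp only [Set.mem_union, Set.mem_Iio, Set.mem_Ioi, not_or, not_lt] at hc
      exact ha ⟨hc.1, lt_of_le_of_ne hc.2 (fun hh => h12 hh)⟩
    filter_upwards [hF ((isOpen_Iio.union isOpen_Ioi).mem_nhds hmem)] with t ht
    refine iff_of_false ?_ ha
    simp only [Set.mem_preimage, Set.mem_union, Set.mem_Iio, Set.mem_Ioi] at ht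
    rcases ht with h' | h'
    · exact fun hact => absurd hact.1 (not_le.2 h')
    · exact fun hact => absurd hact.2 (not_lt.2 h'.le)

lemma eventually_cnt {n : ℕ} {t₀ : ℝ} (h : 0 < gam n t₀) :
    ∀ᶠ t in 𝓝 t₀, cnt n t = cnt n t₀ := by
  have hall : ∀ᶠ t in 𝓝 t₀, ∀ m ∈ Finset.range (n+1), (act m t ↔ act m t₀) := by
    rw [Finset.eventually_all]
    intro m hm
    have hmn : m ≤ n := by simp [Finset.mem_range] at hm; omega
    obtain ⟨a0, a14, a12⟩ := fract_ne_boundary hmn h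
    exact eventually_act a0 a14 a12
  filter_upwards [hall] with t ht
  unfold cnt
  congr 1
  apply Finset.filter_congr
  intro m hm
  simp only [ht m hm]

def G (n k : ℕ) (t : ℝ) : ℝ := gam n t * (if cnt n t = k then 1 else 0)

lemma G_nonneg (n k t) : 0 ≤ G n k t := by
  unfold G; by_cases h : cnt n t = k <;> simp [h, gam_nonneg]
lemma G_le_one (n k t) : G n k t ≤ 1 := by
  unfold G; by_cases h : cnt n t = k
  · simp only [h, if_true, mul_one]; exact gam_le_one n t
  · simp [h]
lemma G_le_gam (n k t) : G n k t ≤ gam n t := by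
  unfold G; by_cases h : cnt n t = k
  · simp [h]
  · simp [h, gam_nonneg]
lemma G_eq_zero_of_ne {n k t} (h : cnt n t ≠ k) : G n k t = 0 := by
  unfold G; simp [h]

lemma cont_G (n k : ℕ) : Continuous (G n k) := by
  rw [continuous_iff_continuousAt]
  intro t₀
  by_cases h : 0 < gam n t₀
  · have hev : G n k =ᶠ[𝓝 t₀] (fun t => gam n t * (if cnt n t₀ = k then 1 else 0)) := by
      filter_upwards [eventually_cnt h] with t ht
      unfold G; rw [ht]
    exact (((cont_gam n).mul continuous_const).continuousAt).congr hev.symm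
  · have h0 : gam n t₀ = 0 := le_antisymm (not_lt.1 h) (gam_nonneg n t₀)
    have hG0 : G n k t₀ = 0 := by unfold G; rw [h0]; ring
    rw [ContinuousAt, hG0]
    have hgam : Tendsto (gam n) (𝓝 t₀) (𝓝 0) := by
      simpa [h0] using ((cont_gam n).tendsto t₀)
    exact tendsto_of_tendsto_of_tendsto_of_le_of_le tendsto_const_nhds hgam
      (fun t => G_nonneg n k t) (fun t => G_le_gam n k t)


/-- partial harmonic sums (note `(0:ℝ)⁻¹ = 0`) -/
def Sh (k : ℕ) : ℝ := ∑ i ∈ Finset.range k, (i:ℝ)⁻¹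

lemma Sh_succ (k : ℕ) : Sh (k+1) = Sh k + (k:ℝ)⁻¹ := Finset.sum_range_succ _ k

lemma Sh_tendsto : Tendsto Sh atTop atTop := by
  have h1 : Tendsto (fun k => Sh (k+1)) atTop atTop := by
    have : (fun k => Sh (k+1)) = fun k => ∑ i ∈ Finset.range k, (1/((i:ℝ)+1)) + 0 := by
      funext k
      unfold Sh
      rw [Finset.sum_range_succ']
      push_cast
      simp [one_div]
    rw [this]
    exact (Real.tendsto_sum_range_one_div_nat_succ_atTop).atTop_add tendsto_const_nhds
  exact (tendsto_add_atTop_iff_nat 1).1 h1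

/-- typewriter arc of length 1/k -/
def J (k : ℕ) : Set ℝ := {x | Int.fract (x - Sh k) < (k:ℝ)⁻¹}

lemma measJ (k : ℕ) : MeasurableSet (J k) := by
  have : J k = (fun x => Int.fract (x - Sh k)) ⁻¹' (Iio ((k:ℝ)⁻¹)) := rfl
  rw [this]
  exact (measurable_fract.comp (measurable_id.sub measurable_const)) measurableSet_Iio

def chi (k : ℕ) (ω : ℝ) : ℝ := if ω ∈ J k then 1 else 0

lemma chi_nonneg (k ω) : 0 ≤ chi k ω := by unfold chi; split <;> norm_num
lemma chi_le_one (k ω) : chi k ω ≤ 1 := by unfold chi; split <;> norm_num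
lemma chi_measurable (k : ℕ) : Measurable (chi k) :=
  Measurable.ite (measJ k) measurable_const measurable_const

/-- measure bound for the arcs -/
lemma volume_J_inter (k : ℕ) :
    volume (J k ∩ Icc 0 1) ≤ ENNReal.ofReal ((k:ℝ)⁻¹) + ENNReal.ofReal ((k:ℝ)⁻¹) := by
  set d : ℝ := (k:ℝ)⁻¹
  set z₁ : ℤ := ⌊-Sh k⌋
  have hsub : J k ∩ Icc 0 1 ⊆
      Ico (Sh k + z₁) (Sh k + z₁ + d) ∪ Ico (Sh k + (z₁+1)) (Sh k + (z₁+1) + d) := by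
    rintro x ⟨hx, hx0, hx1⟩
    have hfr : Int.fract (x - Sh k) < d := hx
    set z : ℤ := ⌊x - Sh k⌋ with hz
    have h1 : x ∈ Ico (Sh k + z) (Sh k + z + d) := by
      constructor
      · have := Int.floor_le (x - Sh k); linarith
      · have : x - Sh k - z < d := by
          have : Int.fract (x - Sh k) = x - Sh k - z := rfl
          linarith [hfr, this ▸ hfr]
        linarith
    have hzlow : z₁ ≤ z := Int.floor_mono (by linarith)
    have hzhigh : z ≤ z₁ + 1 := by
      have : z ≤ ⌊(-Sh k) + (1:ℤ)⌋ := Int.floor_mono (by push_cast; linarith)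
      rwa [Int.floor_add_intCast] at this
    rcases eq_or_lt_of_le hzlow with heq | hlt
    · left; rw [← heq] at h1; exact h1
    · right
      have : z = z₁ + 1 := by omega
      rw [this] at h1
      exact_mod_cast h1
  calc volume (J k ∩ Icc 0 1) ≤ volume (Ico (Sh k + z₁) (Sh k + z₁ + d) ∪
        Ico (Sh k + (z₁+1)) (Sh k + (z₁+1) + d)) := measure_mono hsub
    _ ≤ volume (Ico (Sh k + z₁) (Sh k + z₁ + d)) +
        volume (Ico (Sh k + (z₁+1)) (Sh k + (z₁+1) + d)) := measure_union_le _ _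
    _ ≤ _ := by
        rw [Real.volume_Ico, Real.volume_Ico]
        apply add_le_add <;> (apply ENNReal.ofReal_le_ofReal; linarith)

/-- typewriter covering: every point of [0,1) is hit beyond any index -/
lemma cover (ω : ℝ) (hω : ω ∈ Ico (0:ℝ) 1) (K : ℕ) : ∃ k, K ≤ k ∧ 1 ≤ k ∧ ω ∈ J k := by
  set K' : ℕ := max K 1
  set T : ℝ := Sh K' + Int.fract (ω - Sh K') with hT
  have hex : ∃ k, K' ≤ k ∧ T < Sh (k+1) := by
    have := Sh_tendsto.eventually_gt_atTop T
    rw [eventually_atTop] at this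
    obtain ⟨N, hN⟩ := this
    exact ⟨max K' N, le_max_left _ _, hN _ (by omega)⟩
  obtain ⟨k, hk1, hk2, hmin⟩ : ∃ k, K' ≤ k ∧ T < Sh (k+1) ∧
      ∀ j, j < k → ¬(K' ≤ j ∧ T < Sh (j+1)) :=
    ⟨Nat.find hex, (Nat.find_spec hex).1, (Nat.find_spec hex).2,
      fun j hj => Nat.find_min hex hj⟩
  have hSh_le : Sh k ≤ T := by
    rcases eq_or_lt_of_le hk1 with heq | hlt
    · rw [← heq]; have := Int.fract_nonneg (ω - Sh K'); linarith
    · have hmin' := hmin (k-1) (by omega)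
      push_neg at hmin'
      have := hmin' (by omega)
      have hkk : k - 1 + 1 = k := by omega
      rw [hkk] at this
      linarith
  have hlt2 : T - Sh k < (k:ℝ)⁻¹ := by
    have := Sh_succ k
    linarith
  have hk_pos : 1 ≤ k := le_trans (le_max_right K 1) hk1
  have hfr : Int.fract (ω - Sh k) = T - Sh k := by
    have hzint : ω - T = (⌊ω - Sh K'⌋ : ℝ) := by
      rw [hT, Int.fract]; ring
    have : ω - Sh k = (T - Sh k) + (⌊ω - Sh K'⌋ : ℝ) := by linarith
    rw [this, Int.fract_add_intCast]
    apply Int.fract_eq_self.2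
    constructor
    · linarith
    · have : (k:ℝ)⁻¹ ≤ 1 := by
        apply inv_le_one_of_one_le₀; exact_mod_cast hk_pos
      linarith
  exact ⟨k, le_trans (le_max_left K 1) hk1, hk_pos, by unfold J; rw [Set.mem_setOf_eq, hfr]; exact hlt2⟩



/-- bump continuous functions on [0,1] -/
def g (n k : ℕ) : C(Set.Icc (0:ℝ) 1, ℝ) :=
  ⟨fun x => G n k ↑x, (cont_G n k).comp continuous_subtype_val⟩

/-- the counterexample sequence -/
def f (n : ℕ) (ω : ℝ) : C(Set.Icc (0:ℝ) 1, ℝ) :=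
  ∑ k ∈ Finset.range (n+2), chi k ω • g n k

lemma g_apply (n k : ℕ) (x : Set.Icc (0:ℝ) 1) : g n k x = G n k ↑x := rfl

lemma f_apply (n : ℕ) (ω : ℝ) (x : Set.Icc (0:ℝ) 1) :
    f n ω x = chi (cnt n ↑x) ω * gam n ↑x := by
  unfold f
  rw [ContinuousMap.sum_apply]
  rw [Finset.sum_eq_single (cnt n ↑x)]
  · rw [ContinuousMap.smul_apply, g_apply]
    unfold G
    rw [if_pos rfl, mul_one, smul_eq_mul]
  · intro k _ hne
    rw [ContinuousMap.smul_apply, g_apply, G_eq_zero_of_ne (fun h => hne h.symm), smul_zero]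
  · intro hnot
    exfalso; apply hnot
    rw [Finset.mem_range]
    exact lt_of_le_of_lt (cnt_le n ↑x) (by omega)

lemma abs_f_apply_le (n : ℕ) (ω : ℝ) (x : Set.Icc (0:ℝ) 1) : |f n ω x| ≤ 1 := by
  rw [f_apply, abs_mul]
  have h1 : |chi (cnt n ↑x) ω| ≤ 1 := by
    rw [abs_of_nonneg (chi_nonneg _ _)]; exact chi_le_one _ _
  have h2 : |gam n ↑x| ≤ 1 := by
    rw [abs_of_nonneg (gam_nonneg _ _)]; exact gam_le_one _ _
  calc |chi (cnt n ↑x) ω| * |gam n ↑x| ≤ 1 * 1 := by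
        apply mul_le_mul h1 h2 (abs_nonneg _) zero_le_one
    _ = 1 := by ring

lemma norm_f_le (n : ℕ) (ω : ℝ) : ‖f n ω‖ ≤ 1 :=
  (ContinuousMap.norm_le _ zero_le_one).2 fun x => by
    rw [Real.norm_eq_abs]; exact abs_f_apply_le n ω x

lemma meas_f (n : ℕ) : AEStronglyMeasurable (f n) μ01 := by
  have : f n = fun ω => ∑ k ∈ Finset.range (n+2), chi k ω • g n k := rfl
  rw [this]
  exact Finset.aestronglyMeasurable_fun_sum _ fun k _ =>
    ((chi_measurable k).aestronglyMeasurable).smul_const (g n k)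

/-- key: disjointly supported unit vectors have summable functional values -/
lemma sum_abs_le {ι : Type} (φ : C(Set.Icc (0:ℝ) 1, ℝ) →L[ℝ] ℝ) (F : Finset ι)
    (e : ι → C(Set.Icc (0:ℝ) 1, ℝ))
    (hb : ∀ i (x : Set.Icc (0:ℝ) 1), |e i x| ≤ 1)
    (hd : ∀ (x : Set.Icc (0:ℝ) 1), ∀ i ∈ F, ∀ j ∈ F, i ≠ j → e i x = 0 ∨ e j x = 0) :
    ∑ i ∈ F, |φ (e i)| ≤ ‖φ‖ := by
  classical
  set h : C(Set.Icc (0:ℝ) 1, ℝ) := ∑ i ∈ F, (if 0 ≤ φ (e i) then (1:ℝ) else -1) • e i with hh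
  have hnorm : ‖h‖ ≤ 1 := by
    rw [ContinuousMap.norm_le _ zero_le_one]
    intro x
    rw [hh, ContinuousMap.sum_apply]
    by_cases hex : ∃ i ∈ F, e i x ≠ 0
    · obtain ⟨i₀, hi₀, hne⟩ := hex
      rw [Finset.sum_eq_single_of_mem i₀ hi₀]
      · rw [ContinuousMap.smul_apply, Real.norm_eq_abs, smul_eq_mul, abs_mul]
        have : |(if 0 ≤ φ (e i₀) then (1:ℝ) else -1)| = 1 := by split <;> simp
        rw [this, one_mul]; exact hb i₀ x
      · intro j hj hji
        rcases hd x j hj i₀ hi₀ hji with h0 | h0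
        · rw [ContinuousMap.smul_apply, h0, smul_zero]
        · exact absurd h0 hne
    · push_neg at hex
      rw [Finset.sum_eq_zero]
      · simp
      · intro i hi; rw [ContinuousMap.smul_apply, hex i hi, smul_zero]
  have hval : φ h = ∑ i ∈ F, |φ (e i)| := by
    rw [hh, map_sum]
    apply Finset.sum_congr rfl
    intro i _
    rw [ContinuousLinearMap.map_smul, smul_eq_mul]
    split
    · rw [one_mul, abs_of_nonneg ‹_›]
    · rw [abs_of_neg (lt_of_not_ge ‹_›)]; ring
  calc ∑ i ∈ F, |φ (e i)| = φ h := hval.symm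
    _ ≤ |φ h| := le_abs_self _
    _ ≤ ‖φ‖ * ‖h‖ := by
        have := φ.le_opNorm h
        rwa [Real.norm_eq_abs] at this
    _ ≤ ‖φ‖ * 1 := by
        apply mul_le_mul_of_nonneg_left hnorm (norm_nonneg φ)
    _ = ‖φ‖ := mul_one _

lemma g_ne_zero_imp {n k : ℕ} {x : Set.Icc (0:ℝ) 1} (h : g n k x ≠ 0) :
    cnt n ↑x = k ∧ 0 < gam n ↑x := by
  by_cases hc : cnt n ↑x = k
  · refine ⟨hc, ?_⟩
    rcases lt_or_eq_of_le (gam_nonneg n ↑x) with h' | h'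
    · exact h'
    · exfalso; apply h; rw [g_apply]; unfold G; rw [← h']; ring
  · exact absurd (G_eq_zero_of_ne hc) h

lemma abs_g_le (n k : ℕ) (x : Set.Icc (0:ℝ) 1) : |g n k x| ≤ 1 := by
  rw [g_apply, abs_of_nonneg (G_nonneg n k ↑x)]; exact G_le_one n k ↑x

/-- same n, different k : disjoint supports -/
lemma sum_abs_le_k (φ : C(Set.Icc (0:ℝ) 1, ℝ) →L[ℝ] ℝ) (n : ℕ) :
    ∑ k ∈ Finset.range (n+2), |φ (g n k)| ≤ ‖φ‖ := by
  apply sum_abs_le φ _ _ (fun k x => abs_g_le n k x)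
  intro x i _ j _ hij
  by_contra hc
  push_neg at hc
  obtain ⟨hi, _⟩ := g_ne_zero_imp hc.1
  obtain ⟨hj, _⟩ := g_ne_zero_imp hc.2
  exact hij (hi ▸ hj ▸ rfl)

/-- same k, different n : disjoint supports -/
lemma sum_abs_le_n (φ : C(Set.Icc (0:ℝ) 1, ℝ) →L[ℝ] ℝ) (k : ℕ) (N : ℕ) :
    ∑ n ∈ Finset.range N, |φ (g n k)| ≤ ‖φ‖ := by
  apply sum_abs_le φ _ _ (fun n x => abs_g_le n k x)
  intro x n _ n' _ hnn
  by_contra hc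
  push_neg at hc
  obtain ⟨hn, hgn⟩ := g_ne_zero_imp hc.1
  obtain ⟨hn', hgn'⟩ := g_ne_zero_imp hc.2
  have han := act_of_gam_pos hgn
  have han' := act_of_gam_pos hgn'
  rcases lt_or_gt_of_ne hnn with hlt | hlt
  · have := cnt_lt_cnt hlt han han'
    omega
  · have := cnt_lt_cnt hlt han' han
    omega

lemma tendsto_abs_g (φ : C(Set.Icc (0:ℝ) 1, ℝ) →L[ℝ] ℝ) (k : ℕ) :
    Tendsto (fun n => |φ (g n k)|) atTop (𝓝 0) := by
  have : Summable (fun n => |φ (g n k)|) :=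
    summable_of_sum_range_le (fun n => abs_nonneg _) (fun N => sum_abs_le_n φ k N)
  exact this.tendsto_atTop_zero



instance : IsFiniteMeasure μ01 := by
  constructor
  rw [μ01, Measure.restrict_apply_univ, Real.volume_Icc]
  norm_num

lemma mu01_J_le (k : ℕ) : μ01 (J k) ≤ ENNReal.ofReal (2/(k:ℝ)) := by
  have h1 : μ01 (J k) = volume (J k ∩ Icc 0 1) := by
    rw [μ01, Measure.restrict_apply (measJ k)]
  rw [h1]
  refine le_trans (volume_J_inter k) ?_
  rw [← ENNReal.ofReal_add (by positivity) (by positivity)]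
  apply ENNReal.ofReal_le_ofReal
  apply le_of_eq
  ring


lemma toReal_mu01_J_le (k : ℕ) : (μ01 (J k)).toReal ≤ 2/(k:ℝ) :=
  ENNReal.toReal_le_of_le_ofReal (by positivity) (mu01_J_le k)

lemma toReal_mu01_le_one (s : Set ℝ) : (μ01 s).toReal ≤ 1 := by
  have h1 : μ01 s ≤ μ01 univ := measure_mono (subset_univ s)
  have h2 : μ01 univ = 1 := by
    rw [μ01, Measure.restrict_apply_univ, Real.volume_Icc]; norm_num
  rw [h2] at h1
  have := ENNReal.toReal_mono (by norm_num) h1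
  simpa using this

lemma phi_f (φ : C(Set.Icc (0:ℝ) 1, ℝ) →L[ℝ] ℝ) (n : ℕ) (ω : ℝ) :
    φ (f n ω) = ∑ k ∈ Finset.range (n+2), chi k ω * φ (g n k) := by
  unfold f
  rw [map_sum]
  apply Finset.sum_congr rfl
  intro k _
  rw [ContinuousLinearMap.map_smul, smul_eq_mul]

lemma int_phi_f (φ : C(Set.Icc (0:ℝ) 1, ℝ) →L[ℝ] ℝ) (n : ℕ) :
    Integrable (fun ω => |φ (f n ω)|) μ01 := by
  have hmeas : AEStronglyMeasurable (fun ω => φ (f n ω)) μ01 :=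
    φ.continuous.comp_aestronglyMeasurable (meas_f n)
  apply Integrable.mono' (integrable_const ‖φ‖) hmeas.norm
  apply Eventually.of_forall
  intro ω
  simp only [Real.norm_eq_abs, abs_abs]
  calc |φ (f n ω)| = ‖φ (f n ω)‖ := (Real.norm_eq_abs _).symm
    _ ≤ ‖φ‖ * ‖f n ω‖ := φ.le_opNorm _
    _ ≤ ‖φ‖ * 1 := mul_le_mul_of_nonneg_left (norm_f_le n ω) (norm_nonneg φ)
    _ = ‖φ‖ := mul_one _

lemma chi_eq_indicator (k : ℕ) (a : ℝ) :
    (fun ω => chi k ω * a) = (J k).indicator (fun _ => a) := by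
  funext ω
  unfold chi
  by_cases h : ω ∈ J k
  · rw [if_pos h, one_mul, Set.indicator_of_mem h]
  · rw [if_neg h, zero_mul, Set.indicator_of_notMem h]

lemma integral_bound (φ : C(Set.Icc (0:ℝ) 1, ℝ) →L[ℝ] ℝ) (n K : ℕ) (hK : 1 ≤ K)
    (hKn : K ≤ n) :
    ∫ ω, |φ (f n ω)| ∂μ01 ≤
      (∑ k ∈ Finset.range (K+1), |φ (g n k)|) + 2/(K:ℝ) * ‖φ‖ := by
  have hint : ∀ k a, Integrable (fun ω => chi k ω * a) μ01 := by
    intro k a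
    rw [chi_eq_indicator]
    exact (integrable_const a).indicator (measJ k)
  have step1 : ∫ ω, |φ (f n ω)| ∂μ01 ≤
      ∫ ω, (∑ k ∈ Finset.range (n+2), chi k ω * |φ (g n k)|) ∂μ01 := by
    apply integral_mono (int_phi_f φ n)
    · exact integrable_finset_sum _ (fun k _ => hint k _)
    · intro ω
      show |φ (f n ω)| ≤ ∑ k ∈ Finset.range (n+2), chi k ω * |φ (g n k)|
      rw [phi_f]
      refine le_trans (Finset.abs_sum_le_sum_abs _ _) ?_
      apply Finset.sum_le_sum
      intro k _
      rw [abs_mul, abs_of_nonneg (chi_nonneg k ω)]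
  have step2 : ∫ ω, (∑ k ∈ Finset.range (n+2), chi k ω * |φ (g n k)|) ∂μ01 =
      ∑ k ∈ Finset.range (n+2), |φ (g n k)| * (μ01 (J k)).toReal := by
    rw [integral_finset_sum _ (fun k _ => hint k _)]
    apply Finset.sum_congr rfl
    intro k _
    rw [chi_eq_indicator, integral_indicator_const _ (measJ k)]
    rw [smul_eq_mul, mul_comm]; rfl
  have hsplit : Finset.range (n+2) = Finset.range (K+1) ∪ Finset.Ico (K+1) (n+2) := by
    simp only [Finset.range_eq_Ico]
    exact (Finset.Ico_union_Ico_eq_Ico (by omega) (by omega)).symm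
  have hdisj : Disjoint (Finset.range (K+1)) (Finset.Ico (K+1) (n+2)) := by
    apply Finset.disjoint_left.2
    intro a ha ha'
    rw [Finset.mem_range] at ha
    rw [Finset.mem_Ico] at ha'
    omega
  refine le_trans step1 ?_
  rw [step2, hsplit, Finset.sum_union hdisj]
  apply add_le_add
  · apply Finset.sum_le_sum
    intro k _
    calc |φ (g n k)| * (μ01 (J k)).toReal ≤ |φ (g n k)| * 1 :=
          mul_le_mul_of_nonneg_left (toReal_mu01_le_one _) (abs_nonneg _)
      _ = |φ (g n k)| := mul_one _
  · calc ∑ k ∈ Finset.Ico (K+1) (n+2), |φ (g n k)| * (μ01 (J k)).toReal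
        ≤ ∑ k ∈ Finset.Ico (K+1) (n+2), (2/(K:ℝ)) * |φ (g n k)| := by
          apply Finset.sum_le_sum
          intro k hk
          rw [Finset.mem_Ico] at hk
          rw [mul_comm (2/(K:ℝ))]
          apply mul_le_mul_of_nonneg_left ?_ (abs_nonneg _)
          refine le_trans (toReal_mu01_J_le k) ?_
          apply div_le_div_of_nonneg_left (by norm_num) (by positivity)
          exact_mod_cast (by omega : K ≤ k)
      _ = (2/(K:ℝ)) * ∑ k ∈ Finset.Ico (K+1) (n+2), |φ (g n k)| := by
          rw [Finset.mul_sum]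
      _ ≤ (2/(K:ℝ)) * ‖φ‖ := by
          apply mul_le_mul_of_nonneg_left ?_ (by positivity)
          refine le_trans ?_ (sum_abs_le_k φ n)
          apply Finset.sum_le_sum_of_subset_of_nonneg
          · rw [hsplit]; exact Finset.subset_union_right
          · intro k _ _; exact abs_nonneg _


lemma tendsto_integral_zero (φ : C(Set.Icc (0:ℝ) 1, ℝ) →L[ℝ] ℝ) :
    Tendsto (fun n => ∫ ω, |φ (f n ω)| ∂μ01) atTop (𝓝 0) := by
  rw [Metric.tendsto_atTop]
  intro η hη
  obtain ⟨K, hK⟩ := exists_nat_gt (4*(‖φ‖+1)/η)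
  have hK1 : 1 ≤ K := by
    by_contra hc
    push_neg at hc
    interval_cases K
    have : (0:ℝ) < 4*(‖φ‖+1)/η := by positivity
    simp at hK
    linarith
  have hKb : 2/(K:ℝ) * ‖φ‖ < η/2 := by
    have hKpos : (0:ℝ) < K := by exact_mod_cast hK1
    have h1 : 4*(‖φ‖+1)/η < K := hK
    rw [div_mul_eq_mul_div, div_lt_iff₀ hKpos]
    rw [div_lt_iff₀ hη] at h1
    nlinarith [norm_nonneg φ]
  have hsum : Tendsto (fun n => ∑ k ∈ Finset.range (K+1), |φ (g n k)|) atTop (𝓝 0) := by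
    have := tendsto_finset_sum (Finset.range (K+1)) (fun k _ => tendsto_abs_g φ k)
    simpa using this
  rw [Metric.tendsto_atTop] at hsum
  obtain ⟨N₁, hN₁⟩ := hsum (η/2 - 2/(K:ℝ)*‖φ‖) (by linarith)
  refine ⟨max N₁ K, fun n hn => ?_⟩
  have hn1 : N₁ ≤ n := le_trans (le_max_left _ _) hn
  have hn2 : K ≤ n := le_trans (le_max_right _ _) hn
  have hb := integral_bound φ n K hK1 hn2
  have hs := hN₁ n hn1
  rw [Real.dist_eq, sub_zero] at hs ⊢
  have hsum_nonneg : (0:ℝ) ≤ ∑ k ∈ Finset.range (K+1), |φ (g n k)| :=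
    Finset.sum_nonneg (fun k _ => abs_nonneg _)
  rw [abs_of_nonneg hsum_nonneg] at hs
  have hInonneg : 0 ≤ ∫ ω, |φ (f n ω)| ∂μ01 :=
    integral_nonneg (fun ω => abs_nonneg _)
  rw [abs_of_nonneg hInonneg]
  linarith

lemma scalar_in_measure (φ : C(Set.Icc (0:ℝ) 1, ℝ) →L[ℝ] ℝ) {ε : ℝ} (hε : 0 < ε) :
    Tendsto (fun n => μ01 {ω | ε ≤ |φ (f n ω)|}) atTop (𝓝 0) := by
  have markov : ∀ n, μ01 {ω | ε ≤ |φ (f n ω)|} ≤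
      ENNReal.ofReal (ε⁻¹ * ∫ ω, |φ (f n ω)| ∂μ01) := by
    intro n
    have h1 := mul_meas_ge_le_integral_of_nonneg
      (Eventually.of_forall (fun ω => abs_nonneg (φ (f n ω)))) (int_phi_f φ n) ε
    have h2 : (μ01 {ω | ε ≤ |φ (f n ω)|}).toReal ≤ ε⁻¹ * ∫ ω, |φ (f n ω)| ∂μ01 := by
      rw [← mul_le_mul_iff_right₀ hε]
      calc ε * (μ01 {ω | ε ≤ |φ (f n ω)|}).toReal ≤ ∫ ω, |φ (f n ω)| ∂μ01 := h1
        _ = ε * (ε⁻¹ * ∫ ω, |φ (f n ω)| ∂μ01) := by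
            field_simp
    calc μ01 {ω | ε ≤ |φ (f n ω)|}
        = ENNReal.ofReal ((μ01 {ω | ε ≤ |φ (f n ω)|}).toReal) :=
          (ENNReal.ofReal_toReal (measure_ne_top μ01 _)).symm
      _ ≤ _ := ENNReal.ofReal_le_ofReal h2
  have hlim : Tendsto (fun n => ENNReal.ofReal (ε⁻¹ * ∫ ω, |φ (f n ω)| ∂μ01))
      atTop (𝓝 0) := by
    have h0 : Tendsto (fun n => ε⁻¹ * ∫ ω, |φ (f n ω)| ∂μ01) atTop (𝓝 0) := by
      have := (tendsto_integral_zero φ).const_mul ε⁻¹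
      simpa using this
    have := ENNReal.tendsto_ofReal h0
    simpa using this
  exact tendsto_of_tendsto_of_tendsto_of_le_of_le tendsto_const_nhds hlim
    (fun n => zero_le) markov


section Tstar
variable (m : ℕ → ℕ)

/-- the digit data of the adapted point -/
def u (j : ℕ) : ℝ := (3/2) * ((4:ℝ)⁻¹)^(m j + 1)

/-- the adapted point -/
def tstar : ℝ := ∑' j, u m j

variable (hm2 : ∀ j, m j + 2 ≤ m (j+1)) (hm0 : ∀ j, 2*j ≤ m j)

lemma u_nonneg (j : ℕ) : 0 ≤ u m j := by unfold u; positivity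

include hm0 in
lemma u_le (j : ℕ) : u m j ≤ (3/2) * ((4:ℝ)⁻¹)^(2*j+1) := by
  unfold u
  apply mul_le_mul_of_nonneg_left ?_ (by norm_num)
  apply pow_le_pow_of_le_one (by norm_num) (by norm_num)
  have := hm0 j
  omega

include hm0 in
lemma hsum : Summable (u m) := by
  apply Summable.of_nonneg_of_le (u_nonneg m) (u_le m hm0)
  apply Summable.mul_left
  have h : Summable (fun j : ℕ => ((4:ℝ)⁻¹)^(2*j+1)) := by
    have : ∀ j : ℕ, ((4:ℝ)⁻¹)^(2*j+1) = (4⁻¹) * ((16:ℝ)⁻¹)^j := by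
      intro j
      rw [pow_add, pow_mul, pow_one]
      norm_num
      ring
    rw [funext this]
    apply Summable.mul_left
    exact summable_geometric_of_lt_one (by norm_num) (by norm_num)
  exact h

include hm2 in
lemma m_gap : ∀ j i, m i + 2*j ≤ m (j + i) := by
  intro j
  induction j with
  | zero => intro i; simp
  | succ j ih =>
      intro i
      have h1 := ih i
      have h2 := hm2 (j + i)
      have : j + 1 + i = (j + i) + 1 := by omega
      rw [this]
      omega

include hm2 hm0 in
lemma tail_bound (i n q : ℕ) (hq : ∀ j, n + q + 2*j ≤ m (j+i) + 1) :
    (4:ℝ)^n * ∑' j, u m (j + i) ≤ (3/2) * ((4:ℝ)⁻¹)^q * (16/15) := by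
  have hs : Summable (fun j => u m (j + i)) :=
    (summable_nat_add_iff i).2 (hsum m hm0)
  rw [← tsum_mul_left]
  have hper : ∀ j, (4:ℝ)^n * u m (j + i) ≤ ((3/2) * ((4:ℝ)⁻¹)^q) * ((16:ℝ)⁻¹)^j := by
    intro j
    unfold u
    have hle : n + (q + 2*j) ≤ m (j+i) + 1 := by have := hq j; omega
    have hsplit : m (j+i) + 1 = n + ((q + 2*j) + (m (j+i) + 1 - n - q - 2*j)) := by omega
    set p : ℕ := m (j+i) + 1 - n - q - 2*j
    calc (4:ℝ)^n * ((3/2) * ((4:ℝ)⁻¹)^(m (j+i) + 1))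
        = (3/2) * ((4:ℝ)^n * ((4:ℝ)⁻¹)^(m (j+i) + 1)) := by ring
      _ = (3/2) * (((4:ℝ)⁻¹)^(q + 2*j) * ((4:ℝ)⁻¹)^p) := by
          rw [hsplit, pow_add, pow_add]
          have h4 : (4:ℝ)^n * ((4:ℝ)⁻¹)^n = 1 := by
            rw [← mul_pow]; norm_num
          field_simp
          ring
          rw [← mul_pow]; norm_num
      _ ≤ (3/2) * (((4:ℝ)⁻¹)^(q + 2*j) * 1) := by
          apply mul_le_mul_of_nonneg_left ?_ (by norm_num)
          apply mul_le_mul_of_nonneg_left ?_ (by positivity)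
          exact pow_le_one₀ (by norm_num) (by norm_num)
      _ = ((3/2) * ((4:ℝ)⁻¹)^q) * ((16:ℝ)⁻¹)^j := by
          rw [pow_add, pow_mul]
          norm_num
          ring
  calc ∑' j, (4:ℝ)^n * u m (j + i) ≤ ∑' j, ((3/2) * ((4:ℝ)⁻¹)^q) * ((16:ℝ)⁻¹)^j := by
        apply Summable.tsum_le_tsum hper
        · exact (hs.mul_left _)
        · exact (summable_geometric_of_lt_one (by norm_num) (by norm_num)).mul_left _
    _ = ((3/2) * ((4:ℝ)⁻¹)^q) * ((1 - (16:ℝ)⁻¹)⁻¹) := by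
        rw [tsum_mul_left, tsum_geometric_of_lt_one (by norm_num) (by norm_num)]
    _ = (3/2) * ((4:ℝ)⁻¹)^q * (16/15) := by norm_num


include hm0 in
lemma split_int (n i : ℕ) (hi : ∀ j, j < i → m j + 2 ≤ n) :
    ∃ z : ℤ, (4:ℝ)^n * tstar m = (z:ℝ) + (4:ℝ)^n * ∑' j, u m (j + i) := by
  refine ⟨∑ j ∈ Finset.range i, (6 * 4^(n - m j - 2) : ℤ), ?_⟩
  have hdec : tstar m = (∑ j ∈ Finset.range i, u m j) + ∑' j, u m (j + i) :=
    ((hsum m hm0).sum_add_tsum_nat_add i).symm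
  rw [hdec, mul_add]
  congr 1
  rw [Finset.mul_sum]
  push_cast
  apply Finset.sum_congr rfl
  intro j hj
  rw [Finset.mem_range] at hj
  have h2 := hi j hj
  unfold u
  have hpow : (4:ℝ)^n = 4^(n - m j - 2) * 4^(m j + 1) * 4^1 := by
    rw [← pow_add, ← pow_add]
    congr 1
    omega
  have h4 : (4:ℝ)^(m j + 1) * ((4:ℝ)⁻¹)^(m j + 1) = 1 := by
    rw [← mul_pow]; norm_num
  rw [hpow]
  calc (4:ℝ)^(n - m j - 2) * (4:ℝ)^(m j + 1) * 4^1 * ((3/2) * ((4:ℝ)⁻¹)^(m j + 1))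
      = 6 * (4:ℝ)^(n - m j - 2) * ((4:ℝ)^(m j + 1) * ((4:ℝ)⁻¹)^(m j + 1)) := by ring
    _ = 6 * (4:ℝ)^(n - m j - 2) := by rw [h4, mul_one]
  
set_option maxHeartbeats 1000000 in
include hm2 hm0 in
lemma fract_A (i : ℕ) : Int.fract ((4:ℝ)^(m i) * tstar m) ∈ Icc (3/8 : ℝ) (2/5) := by
  have hij : ∀ j, j < i → m j + 2 ≤ m i := by
    intro j hj
    have h1 := m_gap m hm2 (i - j) j
    have h2 : i - j + j = i := by omega
    rw [h2] at h1
    omega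
  obtain ⟨z, hz⟩ := split_int m hm0 (m i) i hij
  have hub : (4:ℝ)^(m i) * ∑' j, u m (j + i) ≤ 2/5 := by
    have := tail_bound m hm2 hm0 i (m i) 1 (fun j => by
      have h1 := m_gap m hm2 j i
      omega)
    calc (4:ℝ)^(m i) * ∑' j, u m (j + i) ≤ (3/2) * ((4:ℝ)⁻¹)^1 * (16/15) := this
      _ = 2/5 := by norm_num
  have hlb : (3/8 : ℝ) ≤ (4:ℝ)^(m i) * ∑' j, u m (j + i) := by
    have hsum2 : Summable (fun j => u m (j + i)) := (summable_nat_add_iff i).2 (hsum m hm0)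
    have hfirst : u m (0 + i) ≤ ∑' j, u m (j + i) :=
      Summable.le_tsum hsum2 0 (fun j _ => u_nonneg m (j+i))
    have hval : (4:ℝ)^(m i) * u m (0 + i) = 3/8 := by
      unfold u
      rw [zero_add, pow_add]
      have h4 : (4:ℝ)^(m i) * ((4:ℝ)⁻¹)^(m i) = 1 := by rw [← mul_pow]; norm_num
      calc (4:ℝ)^(m i) * ((3/2) * (((4:ℝ)⁻¹)^(m i) * ((4:ℝ)⁻¹)^1))
          = (3/2) * (4⁻¹)^1 * ((4:ℝ)^(m i) * ((4:ℝ)⁻¹)^(m i)) := by ring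
        _ = 3/8 := by rw [h4]; norm_num
    rw [← hval]
    apply mul_le_mul_of_nonneg_left hfirst (by positivity)
  have hmem : (4:ℝ)^(m i) * ∑' j, u m (j + i) ∈ Ico (0:ℝ) 1 :=
    ⟨by linarith, by linarith⟩
  rw [hz, Int.fract_intCast_add, Int.fract_eq_self.2 ⟨hmem.1, hmem.2⟩]
  exact ⟨hlb, hub⟩

set_option maxHeartbeats 1000000 in
include hm2 hm0 in
lemma fract_B (i : ℕ) : Int.fract ((4:ℝ)^(m i + 1) * tstar m) ∈ Icc (1/2 : ℝ) (3/5) := by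
  set n := m i + 1
  obtain ⟨z, hz⟩ := split_int m hm0 n i (fun j hj => by
    have h1 := m_gap m hm2 (i - j) j
    have : i - j + j = i := by omega
    rw [this] at h1
    have : m j + 2*(i-j) ≤ m i := by omega
    omega)
  have hdec2 : ∑' j, u m (j + i) = u m (0 + i) + ∑' j, u m ((j + 1) + i) := by
    have := Summable.sum_add_tsum_nat_add (f := fun j => u m (j + i)) 1
      ((summable_nat_add_iff i).2 (hsum m hm0))
    rw [← this]
    simp [Finset.sum_range_one]
  have hfirst : (4:ℝ)^n * u m (0 + i) = 3/2 := by
    unfold u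
    rw [zero_add]
    have h4 : (4:ℝ)^(m i + 1) * ((4:ℝ)⁻¹)^(m i + 1) = 1 := by rw [← mul_pow]; norm_num
    calc (4:ℝ)^n * ((3/2) * ((4:ℝ)⁻¹)^(m i + 1))
        = (3/2) * ((4:ℝ)^(m i + 1) * ((4:ℝ)⁻¹)^(m i + 1)) := by ring
      _ = 3/2 := by rw [h4]; ring
  have hrest_ub : (4:ℝ)^n * ∑' j, u m ((j + 1) + i) ≤ 1/10 := by
    have heq : ∀ j : ℕ, (j + 1) + i = j + (i + 1) := fun j => by omega
    have : (4:ℝ)^n * ∑' j, u m (j + (i+1)) ≤ (3/2) * ((4:ℝ)⁻¹)^2 * (16/15) := by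
      apply tail_bound m hm2 hm0 (i+1) n 2
      intro j
      have h1 := m_gap m hm2 j (i + 1)
      have h2 := hm2 i
      omega
    calc (4:ℝ)^n * ∑' j, u m ((j + 1) + i) = (4:ℝ)^n * ∑' j, u m (j + (i+1)) := by
          congr 1; apply tsum_congr; intro j; rw [heq j]
      _ ≤ (3/2) * ((4:ℝ)⁻¹)^2 * (16/15) := this
      _ ≤ 1/10 := by norm_num
  have hrest_lb : 0 ≤ (4:ℝ)^n * ∑' j, u m ((j + 1) + i) := by
    apply mul_nonneg (by positivity)
    exact tsum_nonneg (fun j => u_nonneg m _)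
  have hz2 : (4:ℝ)^n * tstar m =
      ((z + 1 : ℤ) : ℝ) + (1/2 + (4:ℝ)^n * ∑' j, u m ((j + 1) + i)) := by
    rw [hz, hdec2, mul_add, hfirst]
    push_cast
    ring
  rw [hz2, Int.fract_intCast_add, Int.fract_eq_self.2 ⟨by linarith, by linarith⟩]
  constructor <;> linarith

set_option maxHeartbeats 1000000 in
include hm2 hm0 in
lemma fract_C (n : ℕ) (hA : ∀ i, n ≠ m i) (hB : ∀ i, n ≠ m i + 1) :
    Int.fract ((4:ℝ)^n * tstar m) ∈ Icc (0:ℝ) (1/10) := by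
  have hex : ∃ i, n ≤ m i := ⟨n, by have := hm0 n; omega⟩
  classical
  set i := Nat.find hex with hi
  have hile : n ≤ m i := Nat.find_spec hex
  have hilt : n < m i := lt_of_le_of_ne hile (fun h => hA i h)
  obtain ⟨z, hz⟩ := split_int m hm0 n i (fun j hj => by
    have hjlt : ¬ (n ≤ m j) := Nat.find_min hex hj
    push_neg at hjlt
    have := hB j
    omega)
  have hub : (4:ℝ)^n * ∑' j, u m (j + i) ≤ 1/10 := by
    have := tail_bound m hm2 hm0 i n 2 (fun j => by
      have h1 := m_gap m hm2 j i
      omega)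
    calc (4:ℝ)^n * ∑' j, u m (j + i) ≤ (3/2) * ((4:ℝ)⁻¹)^2 * (16/15) := this
      _ ≤ 1/10 := by norm_num
  have hlb : 0 ≤ (4:ℝ)^n * ∑' j, u m (j + i) := by
    apply mul_nonneg (by positivity)
    exact tsum_nonneg (fun j => u_nonneg m _)
  rw [hz, Int.fract_intCast_add, Int.fract_eq_self.2 ⟨by linarith, by linarith⟩]
  exact ⟨hlb, hub⟩


include hm2 hm0 in
lemma tstar_mem : tstar m ∈ Icc (0:ℝ) 1 := by
  constructor
  · exact tsum_nonneg (fun j => u_nonneg m j)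
  · have h := tail_bound m hm2 hm0 0 0 1 (fun j => by have := hm0 j; simp only [Nat.add_zero]; omega)
    have he : tstar m = (4:ℝ)^0 * ∑' j, u m (j + 0) := by
      rw [pow_zero, one_mul]
      unfold tstar
      apply tsum_congr
      intro j
      norm_num
    rw [he]
    refine le_trans h (by norm_num)

include hm2 hm0 in
lemma gam_tstar_A (i : ℕ) : gam (m i) (tstar m) = 1 := by
  obtain ⟨h1, h2⟩ := fract_A m hm2 hm0 i
  unfold gam
  apply Lam_eq_one <;> linarith

include hm2 hm0 in
lemma act_tstar_iff (n : ℕ) : act n (tstar m) ↔ ∃ i, m i = n := by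
  constructor
  · intro ha
    by_contra hc
    push_neg at hc
    by_cases hb : ∃ i, n = m i + 1
    · obtain ⟨i, rfl⟩ := hb
      obtain ⟨h1, h2⟩ := fract_B m hm2 hm0 i
      obtain ⟨ha1, ha2⟩ := ha
      linarith
    · push_neg at hb
      obtain ⟨h1, h2⟩ := fract_C m hm2 hm0 n (fun i h => hc i h.symm) hb
      obtain ⟨ha1, ha2⟩ := ha
      linarith
  · rintro ⟨i, rfl⟩
    obtain ⟨h1, h2⟩ := fract_A m hm2 hm0 i
    constructor <;> [linarith; linarith]

include hm2 hm0 in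
lemma gam_tstar_ne (n : ℕ) (h : ∀ i, m i ≠ n) : gam n (tstar m) = 0 := by
  unfold gam
  by_cases hb : ∃ i, n = m i + 1
  · obtain ⟨i, rfl⟩ := hb
    obtain ⟨h1, h2⟩ := fract_B m hm2 hm0 i
    exact Lam_eq_zero_right (by linarith)
  · push_neg at hb
    obtain ⟨h1, h2⟩ := fract_C m hm2 hm0 n (fun i hi => h i hi.symm) hb
    exact Lam_eq_zero_left (by linarith)

include hm2 in
lemma m_strictMono : StrictMono m :=
  strictMono_nat_of_lt_succ (fun n => by have := hm2 n; omega)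

include hm2 hm0 in
lemma cnt_tstar (j : ℕ) : cnt (m j) (tstar m) = j + 1 := by
  classical
  unfold cnt
  have heq : (Finset.range (m j + 1)).filter (fun n => act n (tstar m)) =
      Finset.image m (Finset.range (j+1)) := by
    ext n
    simp only [Finset.mem_filter, Finset.mem_range, Finset.mem_image]
    rw [act_tstar_iff m hm2 hm0 n]
    constructor
    · rintro ⟨hlt, i, rfl⟩
      refine ⟨i, ?_, rfl⟩
      have := (m_strictMono m hm2).le_iff_le (a := i) (b := j)
      omega
    · rintro ⟨i, hij, rfl⟩
      constructor
      · have : m i ≤ m j := (m_strictMono m hm2).le_iff_le.2 (by omega)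
        omega
      · exact ⟨i, rfl⟩
  rw [heq, Finset.card_image_of_injective _ (m_strictMono m hm2).injective,
    Finset.card_range]

end Tstar


lemma mu01_univ : μ01 univ = 1 := by
  rw [μ01, Measure.restrict_apply_univ, Real.volume_Icc]
  norm_num

end Ctr

theorem stmt_8 :
    ∃ f : ℕ → ℝ → C(Set.Icc (0:ℝ) 1, ℝ),
      (∀ n, AEStronglyMeasurable (f n) μ01) ∧
      (∀ n, ∀ᵐ ω ∂μ01, ‖f n ω‖ ≤ 1) ∧
      ScalarInMeasure f 0 ∧
      ∀ φ : ℕ → ℕ, StrictMono φ →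
        ¬ ScalarAE (fun k => f (φ k)) (0 : ℝ → C(Set.Icc (0:ℝ) 1, ℝ)) := by
  refine ⟨Ctr.f, Ctr.meas_f, ?_, ?_, ?_⟩
  · intro n
    exact Eventually.of_forall (fun ω => Ctr.norm_f_le n ω)
  · intro φ
    refine tendstoInMeasure_of_ne_top (fun ε hε hεtop => ?_)
    have hset : ∀ n, {ω | ε ≤ edist (φ (Ctr.f n ω))
        ((fun ω => φ ((0 : ℝ → C(Set.Icc (0:ℝ) 1, ℝ)) ω)) ω)} =
        {ω | ε.toReal ≤ |φ (Ctr.f n ω)|} := by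
      intro n
      ext ω
      simp only [Set.mem_setOf_eq, edist_dist, Real.dist_eq, Pi.zero_apply, map_zero, sub_zero]
      exact ENNReal.le_ofReal_iff_toReal_le hεtop (abs_nonneg _)
    simp only [hset]
    exact Ctr.scalar_in_measure φ (ENNReal.toReal_pos hε.ne' hεtop)
  · intro φs hφs hSAE
    set m : ℕ → ℕ := fun j => φs (2*j) with hm
    have hm2 : ∀ j, m j + 2 ≤ m (j+1) := by
      intro j
      have h1 := hφs (show 2*j < 2*j+1 by omega)
      have h2 := hφs (show 2*j+1 < 2*(j+1) by omega)
      simp only [hm]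
      omega
    have hm0 : ∀ j, 2*j ≤ m j := fun j => hφs.le_apply
    have ht : Ctr.tstar m ∈ Set.Icc (0:ℝ) 1 := Ctr.tstar_mem m hm2 hm0
    set x : Set.Icc (0:ℝ) 1 := ⟨Ctr.tstar m, ht⟩ with hx
    set φ : C(Set.Icc (0:ℝ) 1, ℝ) →L[ℝ] ℝ := ContinuousMap.evalCLM ℝ x with hφ
    have hae2 : ∀ᵐ ω ∂μ01, ω ∈ Set.Icc (0:ℝ) 1 := by
      show ∀ᵐ ω ∂(volume.restrict (Set.Icc 0 1)), ω ∈ Set.Icc (0:ℝ) 1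
      exact ae_restrict_mem measurableSet_Icc
    have hae3 : ∀ᵐ ω ∂μ01, ω ≠ 1 := by
      rw [ae_iff]
      have hs : {ω : ℝ | ¬ ω ≠ 1} = {(1:ℝ)} := by ext; simp
      rw [hs]
      show (volume.restrict (Set.Icc 0 1)) {(1:ℝ)} = 0
      rw [Measure.restrict_apply (measurableSet_singleton 1)]
      apply measure_mono_null (inter_subset_left)
      exact Real.volume_singleton
    have hne : (MeasureTheory.ae μ01).NeBot := by
      rw [ae_neBot]
      intro h0
      have h1 := Ctr.mu01_univ
      rw [h0] at h1
      simp at h1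
    obtain ⟨ω, h1, h2, h3⟩ := ((hSAE φ).and (hae2.and hae3)).exists
    have hω : ω ∈ Set.Ico (0:ℝ) 1 := ⟨h2.1, lt_of_le_of_ne h2.2 h3⟩
    have hzero : φ ((0 : ℝ → C(Set.Icc (0:ℝ) 1, ℝ)) ω) = 0 := by simp
    rw [hzero] at h1
    have h2j : Tendsto (fun j : ℕ => 2*j) atTop atTop := by
      apply StrictMono.tendsto_atTop
      intro a b hab
      simp only []
      omega
    have h4 : Tendsto (fun j => φ (Ctr.f (m j) ω)) atTop (𝓝 0) := h1.comp h2j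
    have hval : ∀ j, φ (Ctr.f (m j) ω) = Ctr.chi (j+1) ω := by
      intro j
      have happ : φ (Ctr.f (m j) ω) = Ctr.f (m j) ω x := rfl
      rw [happ, Ctr.f_apply (m j) ω x]
      have hcoe : (↑x : ℝ) = Ctr.tstar m := rfl
      rw [hcoe, Ctr.cnt_tstar m hm2 hm0 j, Ctr.gam_tstar_A m hm2 hm0 j, mul_one]
    rw [Metric.tendsto_atTop] at h4
    obtain ⟨N, hN⟩ := h4 1 one_pos
    obtain ⟨k, hk1, hk2, hk3⟩ := Ctr.cover ω hω (N+1)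
    have hfin := hN (k-1) (by omega)
    have hkk : (k-1)+1 = k := by omega
    have hchi : Ctr.chi ((k-1)+1) ω = 1 := by
      rw [hkk]
      unfold Ctr.chi
      rw [if_pos hk3]
    rw [hval (k-1), Real.dist_eq, sub_zero, hchi] at hfin
    norm_num at hfin
end
end

section
/- Let X = c₀ (the real Banach space of real sequences converging to 0, with the supremum norm). For every 1 ≤ p ≤ ∞, every L_p(c₀)-bounded sequence in L₀(c₀) that converges scalarly in measure to the null function has a subsequence converging scalarly a.e. to the null function. -/
open MeasureTheory Filter Topology ENNReal Set

noncomputable section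

namespace Aux13
open scoped Classical NNReal

abbrev C0 := ZeroAtInftyContinuousMap ℕ ℝ

lemma tendsto_apply_atTop (x : C0) : Tendsto (fun j => x j) atTop (𝓝 (0:ℝ)) := by
  have := x.zero_at_infty'
  rwa [cocompact_eq_cofinite, Nat.cofinite_eq_atTop] at this

lemma abs_apply_le_norm (x : C0) (j : ℕ) : |x j| ≤ ‖x‖ := by
  rw [← ZeroAtInftyContinuousMap.norm_toBCF_eq_norm, ← Real.norm_eq_abs]
  exact x.toBCF.norm_coe_le_norm j

lemma norm_le_of (x : C0) {C : ℝ} (hC : 0 ≤ C) (h : ∀ j, |x j| ≤ C) : ‖x‖ ≤ C := by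
  rw [← ZeroAtInftyContinuousMap.norm_toBCF_eq_norm]
  exact (BoundedContinuousFunction.norm_le hC).mpr (by simpa [Real.norm_eq_abs] using h)

/-- restriction of a `c₀` sequence to a set of indices -/
def restr0 (S : Set ℕ) (x : C0) : C0 where
  toFun := fun j => if j ∈ S then x j else 0
  continuous_toFun := continuous_of_discreteTopology
  zero_at_infty' := by
    rw [cocompact_eq_cofinite, Nat.cofinite_eq_atTop]
    have habs : Tendsto (fun j => |x j|) atTop (𝓝 (0:ℝ)) := by
      simpa using (tendsto_apply_atTop x).abs
    have hneg : Tendsto (fun j => -|x j|) atTop (𝓝 (0:ℝ)) := by simpa using habs.neg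
    refine tendsto_of_tendsto_of_tendsto_of_le_of_le hneg habs ?_ ?_ <;> intro j <;>
      by_cases h : j ∈ S <;> simp [h, abs_nonneg, neg_abs_le, le_abs_self]

@[simp] lemma restr0_apply (S : Set ℕ) (x : C0) (j : ℕ) :
    restr0 S x j = if j ∈ S then x j else 0 := rfl

def restr (S : Set ℕ) : C0 →L[ℝ] C0 :=
  LinearMap.mkContinuous
    { toFun := restr0 S
      map_add' := by
        intros a b; ext j
        by_cases h : j ∈ S <;> simp [h]
      map_smul' := by
        intros c a; ext j
        by_cases h : j ∈ S <;> simp [h] }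
    1 (by
      intro x
      simp only [LinearMap.coe_mk, AddHom.coe_mk, one_mul]
      refine norm_le_of _ (norm_nonneg x) fun j => ?_
      by_cases h : j ∈ S <;> simp [h, abs_apply_le_norm, norm_nonneg])

@[simp] lemma restr_apply (S : Set ℕ) (x : C0) (j : ℕ) :
    restr S x j = if j ∈ S then x j else 0 := rfl

lemma norm_restr_le (S : Set ℕ) (x : C0) : ‖restr S x‖ ≤ ‖x‖ := by
  refine norm_le_of _ (norm_nonneg x) fun j => ?_
  by_cases h : j ∈ S <;> simp [h, abs_apply_le_norm, norm_nonneg]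

def ev (j : ℕ) : C0 →L[ℝ] ℝ :=
  LinearMap.mkContinuous
    { toFun := fun x => x j
      map_add' := by intros; simp
      map_smul' := by intros; simp }
    1 (by intro x; simpa [Real.norm_eq_abs] using abs_apply_le_norm x j)

@[simp] lemma ev_apply (j : ℕ) (x : C0) : ev j x = x j := rfl

def sing (j : ℕ) : C0 where
  toFun := fun i => if i = j then (1:ℝ) else 0
  continuous_toFun := continuous_of_discreteTopology
  zero_at_infty' := by
    rw [cocompact_eq_cofinite, Nat.cofinite_eq_atTop]
    refine tendsto_const_nhds.congr' ?_
    filter_upwards [eventually_gt_atTop j] with i hi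
    simp [Nat.ne_of_gt hi]

@[simp] lemma sing_apply (j i : ℕ) : sing j i = if i = j then (1:ℝ) else 0 := rfl

instance : IsProbabilityMeasure μ01 :=
  ⟨by simp [μ01, Measure.restrict_apply_univ, Real.volume_Icc]⟩

lemma geom_ne_top : (∑' k : ℕ, (2⁻¹ : ℝ≥0∞) ^ k) ≠ ⊤ := by
  rw [ENNReal.tsum_geometric]
  refine ENNReal.inv_ne_top.mpr ?_
  have h2 : (2⁻¹ : ℝ≥0∞) < 1 := ENNReal.inv_lt_one.mpr one_lt_two
  exact (tsub_pos_iff_lt.mpr h2).ne'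

lemma geom_succ_ne_top : (∑' k : ℕ, (2⁻¹ : ℝ≥0∞) ^ (k + 1)) ≠ ⊤ := by
  refine ne_top_of_le_ne_top geom_ne_top (ENNReal.tsum_le_tsum fun k => ?_)
  rw [pow_succ]
  calc (2⁻¹ : ℝ≥0∞) ^ k * 2⁻¹ ≤ (2⁻¹ : ℝ≥0∞) ^ k * 1 :=
        mul_le_mul_right (ENNReal.inv_le_one.mpr one_le_two) _
    _ = (2⁻¹ : ℝ≥0∞) ^ k := mul_one _

lemma ae_tendsto_of_tsum (g : ℕ → ℝ → ℝ≥0∞) (hmeas : ∀ k, AEMeasurable (g k) μ01)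
    (h : (∑' k, ∫⁻ ω, g k ω ∂μ01) ≠ ⊤) :
    ∀ᵐ ω ∂μ01, Tendsto (fun k => g k ω) atTop (𝓝 0) := by
  rw [← lintegral_tsum hmeas] at h
  filter_upwards [ae_lt_top' (AEMeasurable.ennreal_tsum hmeas) h] with ω hω
  exact ENNReal.tendsto_atTop_zero_of_tsum_ne_top hω.ne

lemma enorm_tendsto {E : Type*} [NormedAddCommGroup E] {y : ℕ → E}
    (h : Tendsto (fun k => (‖y k‖₊ : ℝ≥0∞)) atTop (𝓝 0)) :
    Tendsto y atTop (𝓝 0) := by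
  rw [tendsto_zero_iff_norm_tendsto_zero]
  have h' : Tendsto (fun k => (‖y k‖₊ : ℝ≥0)) atTop (𝓝 (0 : ℝ≥0)) :=
    ENNReal.tendsto_coe.mp (by simpa using h)
  simpa [Function.comp] using NNReal.tendsto_coe.mpr h'

lemma decomp (a b : ℕ) (hab : a ≤ b) (x : C0) :
    x = restr {i | i ≤ a} x + restr (Set.Ioc a b) x + restr {i | b < i} x := by
  ext j
  simp only [ZeroAtInftyContinuousMap.coe_add, Pi.add_apply, restr_apply, Set.mem_setOf_eq,
    Set.mem_Ioc]
  rcases le_or_gt j a with h1 | h1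
  · rw [if_pos h1, if_neg (by omega), if_neg (by omega)]; ring
  · rcases le_or_gt j b with h2 | h2
    · rw [if_neg (by omega), if_pos ⟨h1, h2⟩, if_neg (by omega)]; ring
    · rw [if_neg (by omega), if_neg (by omega), if_pos h2]; ring

lemma restr_Ioc_eq_sum (a b : ℕ) (x : C0) :
    restr (Set.Ioc a b) x = ∑ j ∈ Finset.Ioc a b, x j • sing j := by
  ext i
  have hR : ((∑ j ∈ Finset.Ioc a b, x j • sing j : C0) : ℕ → ℝ) i
      = ∑ j ∈ Finset.Ioc a b, x j * sing j i := by
    rw [← ev_apply i, map_sum]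
    simp [smul_eq_mul]
  rw [hR]
  simp [mul_ite, Finset.sum_ite_eq, Finset.mem_Ioc, Set.mem_Ioc]

lemma phi_restr_Ioc (φ : C0 →L[ℝ] ℝ) (a b : ℕ) (x : C0) :
    φ (restr (Set.Ioc a b) x) = ∑ j ∈ Finset.Ioc a b, x j * φ (sing j) := by
  rw [restr_Ioc_eq_sum, map_sum]
  simp [smul_eq_mul]

lemma sum_abs_phi_sing_le (φ : C0 →L[ℝ] ℝ) (F : Finset ℕ) :
    ∑ j ∈ F, |φ (sing j)| ≤ ‖φ‖ := by
  classical
  obtain ⟨e, he⟩ : ∃ e : ℕ → ℝ, ∀ j, (|e j| ≤ 1 ∧ e j * φ (sing j) = |φ (sing j)|) := by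
    refine ⟨fun j => if 0 ≤ φ (sing j) then (1 : ℝ) else -1, fun j => ?_⟩
    by_cases h : 0 ≤ φ (sing j)
    · simp [h, abs_of_nonneg h]
    · simp [h, abs_of_neg (lt_of_not_ge h)]
  set u : C0 := ∑ j ∈ F, e j • sing j with hu
  have hnorm : ‖u‖ ≤ 1 := by
    refine norm_le_of _ zero_le_one fun i => ?_
    have hui : u i = ∑ j ∈ F, e j * sing j i := by
      rw [hu, ← ev_apply i, map_sum]
      simp only [_root_.map_smul, ev_apply, smul_eq_mul]
    rw [hui]
    simp only [sing_apply, mul_ite, mul_one, mul_zero, Finset.sum_ite_eq]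
    split_ifs with h
    · exact (he i).1
    · norm_num
  have hphi : φ u = ∑ j ∈ F, |φ (sing j)| := by
    rw [hu, map_sum]
    refine Finset.sum_congr rfl fun j _ => ?_
    rw [_root_.map_smul, smul_eq_mul]
    exact (he j).2
  calc ∑ j ∈ F, |φ (sing j)| = φ u := hphi.symm
    _ ≤ |φ u| := le_abs_self _
    _ = ‖φ u‖ := (Real.norm_eq_abs _).symm
    _ ≤ ‖φ‖ * ‖u‖ := φ.le_opNorm u
    _ ≤ ‖φ‖ * 1 := mul_le_mul_of_nonneg_left hnorm (norm_nonneg φ)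
    _ = ‖φ‖ := mul_one _

lemma sum_ennorm_phi_sing_le (φ : C0 →L[ℝ] ℝ) (F : Finset ℕ) :
    ∑ j ∈ F, (‖φ (sing j)‖₊ : ℝ≥0∞) ≤ (‖φ‖₊ : ℝ≥0∞) := by
  rw [← ENNReal.coe_finset_sum, ENNReal.coe_le_coe, ← NNReal.coe_le_coe, NNReal.coe_sum]
  simpa [coe_nnnorm, Real.norm_eq_abs] using sum_abs_phi_sing_le φ F

lemma tendsto_norm_restr_tail (x : C0) :
    Tendsto (fun J : ℕ => ‖restr {i | J < i} x‖) atTop (𝓝 0) := by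
  refine Metric.tendsto_atTop.mpr fun ε hε => ?_
  have habs : Tendsto (fun j => |x j|) atTop (𝓝 (0 : ℝ)) := by
    simpa using (tendsto_apply_atTop x).abs
  obtain ⟨J₀, hJ₀⟩ := eventually_atTop.mp (habs.eventually_lt_const (half_pos hε))
  refine ⟨J₀, fun J hJ => ?_⟩
  have hle : ‖restr {i | J < i} x‖ ≤ ε / 2 := by
    refine norm_le_of _ (half_pos hε).le fun j => ?_
    simp only [restr_apply, Set.mem_setOf_eq]
    by_cases h : J < j
    · rw [if_pos h]
      exact (hJ₀ j (le_trans hJ h.le)).le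
    · rw [if_neg h]
      simpa using (half_pos hε).le
  rw [Real.dist_eq, sub_zero, abs_of_nonneg (norm_nonneg _)]
  linarith

end Aux13

theorem stmt_13 :
    ∀ p : ℝ≥0∞, 1 ≤ p →
      ∀ f : ℕ → ℝ → ZeroAtInftyContinuousMap ℕ ℝ,
        (∀ n, AEStronglyMeasurable (f n) μ01) → LpBounded p f →
        ScalarInMeasure f 0 →
        ∃ φ : ℕ → ℕ, StrictMono φ ∧ ScalarAE (fun k => f (φ k)) 0 := by
  classical
  intro p hp f hm hLp hsc
  obtain ⟨C, hC, hCb⟩ := hLp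
  have hL1 : ∀ n, ∫⁻ ω, (‖f n ω‖₊ : ℝ≥0∞) ∂μ01 ≤ C := by
    intro n
    simp only [← enorm_eq_nnnorm]; rw [← eLpNorm_one_eq_lintegral_enorm]
    exact (eLpNorm_le_eLpNorm_of_exponent_le hp (hm n)).trans (hCb n)
  have hcoord : ∀ n j, ∫⁻ ω, (‖f n ω j‖₊ : ℝ≥0∞) ∂μ01 ≤ C := by
    intro n j
    refine le_trans (lintegral_mono fun ω => ?_) (hL1 n)
    exact ENNReal.coe_le_coe.2 (by
      rw [← NNReal.coe_le_coe]
      simpa [coe_nnnorm, Real.norm_eq_abs] using Aux13.abs_apply_le_norm (f n ω) j)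
  have hco : ∀ (j : ℕ) (ε : ℝ), 0 < ε →
      Tendsto (fun n => μ01 {ω | ε ≤ |f n ω j|}) atTop (𝓝 0) := by
    intro j ε hε
    have h := hsc (Aux13.ev j) (ENNReal.ofReal ε) (ENNReal.ofReal_pos.mpr hε)
    simpa [Aux13.ev_apply, edist_dist, Real.dist_eq, ENNReal.ofReal_le_ofReal_iff (abs_nonneg _)] using h
  -- Choice of indices with small heads
  have hA : ∀ J N k : ℕ, ∃ n, N < n ∧
      μ01 {ω | (1/2 : ℝ) ^ k ≤ ‖Aux13.restr {i | i ≤ J} (f n ω)‖} ≤ (2⁻¹ : ℝ≥0∞) ^ k := by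
    intro J N k
    have hδ : (0 : ℝ≥0∞) < (2⁻¹ : ℝ≥0∞) ^ k / ((J : ℝ≥0∞) + 1) := by
      refine ENNReal.div_pos (pow_ne_zero _ ?_) ?_
      · simp
      · exact ENNReal.add_ne_top.mpr ⟨ENNReal.natCast_ne_top J, one_ne_top⟩
    have hev : ∀ᶠ n in atTop, ∀ j ∈ Finset.range (J + 1),
        μ01 {ω | (1/2 : ℝ) ^ (k+1) ≤ |f n ω j|} < (2⁻¹ : ℝ≥0∞) ^ k / ((J : ℝ≥0∞) + 1) := by
      rw [eventually_all_finset]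
      intro j _
      exact (hco j _ (by positivity)).eventually_lt_const hδ
    obtain ⟨n, hn1, hn2⟩ := (hev.and (eventually_gt_atTop N)).exists
    refine ⟨n, hn2, ?_⟩
    have hsub : {ω | (1/2 : ℝ) ^ k ≤ ‖Aux13.restr {i | i ≤ J} (f n ω)‖}
        ⊆ ⋃ j ∈ Finset.range (J + 1), {ω | (1/2 : ℝ) ^ (k+1) ≤ |f n ω j|} := by
      intro ω hω
      simp only [Set.mem_setOf_eq] at hω
      by_contra hc
      simp only [Set.mem_iUnion, Set.mem_setOf_eq, not_exists, not_le] at hc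
      have hnle : ‖Aux13.restr {i | i ≤ J} (f n ω)‖ ≤ (1/2 : ℝ) ^ (k+1) := by
        refine Aux13.norm_le_of _ (by positivity) fun i => ?_
        simp only [Aux13.restr_apply, Set.mem_setOf_eq]
        by_cases h : i ≤ J
        · rw [if_pos h]
          exact (hc i (Finset.mem_range.mpr (by omega))).le
        · rw [if_neg h]
          simpa using le_of_lt (by positivity : (0:ℝ) < (1/2 : ℝ) ^ (k+1))
      have hlt : (1/2 : ℝ) ^ (k+1) < (1/2 : ℝ) ^ k :=
        pow_lt_pow_right_of_lt_one₀ (by norm_num) (by norm_num) (Nat.lt_succ_self k)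
      linarith
    refine le_trans (measure_mono hsub) ?_
    refine le_trans (measure_biUnion_finset_le _ _) ?_
    refine le_trans (Finset.sum_le_sum fun j hj => (hn1 j hj).le) ?_
    rw [Finset.sum_const, Finset.card_range, nsmul_eq_mul]
    have hcast : ((J + 1 : ℕ) : ℝ≥0∞) = (J : ℝ≥0∞) + 1 := by push_cast; ring
    rw [hcast]
    exact ENNReal.mul_div_le
  -- Choice of tail cut-offs
  have hB : ∀ n J₀ k : ℕ, ∃ J, J₀ < J ∧
      ∫⁻ ω, (‖Aux13.restr {i | J < i} (f n ω)‖₊ : ℝ≥0∞) ∂μ01 ≤ (2⁻¹ : ℝ≥0∞) ^ k := by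
    intro n J₀ k
    have hmeas : ∀ J : ℕ,
        AEMeasurable (fun ω => (‖Aux13.restr {i | J < i} (f n ω)‖₊ : ℝ≥0∞)) μ01 :=
      fun J => ((Aux13.restr {i | J < i}).continuous.comp_aestronglyMeasurable (hm n)).enorm
    have hlim : Tendsto (fun J : ℕ =>
        ∫⁻ ω, (‖Aux13.restr {i | J < i} (f n ω)‖₊ : ℝ≥0∞) ∂μ01) atTop (𝓝 0) := by
      have h0 : (0 : ℝ≥0∞) = ∫⁻ _ω, (0 : ℝ≥0∞) ∂μ01 := by simp
      rw [h0]
      refine tendsto_lintegral_of_dominated_convergence' (fun ω => (‖f n ω‖₊ : ℝ≥0∞))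
        hmeas (fun J => Eventually.of_forall fun ω => ?_) ((hL1 n).trans_lt hC).ne
        (Eventually.of_forall fun ω => ?_)
      · exact ENNReal.coe_le_coe.2 (by
          rw [← NNReal.coe_le_coe]
          simpa [coe_nnnorm] using Aux13.norm_restr_le {i | J < i} (f n ω))
      · have h2 := ENNReal.tendsto_ofReal (Aux13.tendsto_norm_restr_tail (f n ω))
        simp only [ofReal_norm, ENNReal.ofReal_zero] at h2; exact h2
    have hpos : (0 : ℝ≥0∞) < (2⁻¹ : ℝ≥0∞) ^ k := by
      refine pos_iff_ne_zero.mpr (pow_ne_zero _ ?_); simp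
    obtain ⟨J, hJ1, hJ2⟩ := ((hlim.eventually_le_const hpos).and (eventually_gt_atTop J₀)).exists
    exact ⟨J, hJ2, hJ1⟩
  choose FA hFA1 hFA2 using hA
  choose FB hFB1 hFB2 using hB
  set s : ℕ → ℕ × ℕ := fun k =>
    Nat.rec (0, 0) (fun k p => (FA p.2 p.1 (k+1), FB (FA p.2 p.1 (k+1)) p.2 (k+1))) k with hs
  set n : ℕ → ℕ := fun k => (s k).1 with hndef
  set J : ℕ → ℕ := fun k => (s k).2 with hJdef
  have hs1 : ∀ k, n (k+1) = FA (J k) (n k) (k+1) := fun k => rfl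
  have hs2 : ∀ k, J (k+1) = FB (FA (J k) (n k) (k+1)) (J k) (k+1) := fun k => rfl
  have hnlt : ∀ k, n k < n (k+1) := fun k => by
    rw [hs1]; exact hFA1 (J k) (n k) (k+1)
  have hJlt : ∀ k, J k < J (k+1) := fun k => by
    rw [hs2]; exact hFB1 (FA (J k) (n k) (k+1)) (J k) (k+1)
  have hJmono : Monotone J := (strictMono_nat_of_lt_succ hJlt).monotone
  have hHead : ∀ k, μ01 {ω | (1/2 : ℝ) ^ (k+1) ≤
      ‖Aux13.restr {i | i ≤ J k} (f (n (k+1)) ω)‖} ≤ (2⁻¹ : ℝ≥0∞) ^ (k+1) := fun k => by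
    have h := hFA2 (J k) (n k) (k+1)
    rwa [← hs1 k] at h
  have hTail : ∀ k, ∫⁻ ω, (‖Aux13.restr {i | J (k+1) < i} (f (n (k+1)) ω)‖₊ : ℝ≥0∞) ∂μ01
      ≤ (2⁻¹ : ℝ≥0∞) ^ (k+1) := fun k => by
    have h := hFB2 (FA (J k) (n k) (k+1)) (J k) (k+1)
    rwa [← hs1 k, ← hs2 k] at h
  refine ⟨fun k => n (k+1), strictMono_nat_of_lt_succ fun k => hnlt (k+1), ?_⟩
  intro φ
  have aeHead : ∀ᵐ ω ∂μ01,
      Tendsto (fun k => ‖Aux13.restr {i | i ≤ J k} (f (n (k+1)) ω)‖) atTop (𝓝 0) := by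
    have hsum : (∑' k, μ01 {ω | (1/2 : ℝ) ^ (k+1) ≤
        ‖Aux13.restr {i | i ≤ J k} (f (n (k+1)) ω)‖}) ≠ ⊤ :=
      ne_top_of_le_ne_top Aux13.geom_succ_ne_top (ENNReal.tsum_le_tsum fun k => hHead k)
    filter_upwards [ae_eventually_notMem hsum] with ω hω
    have hbdd : ∀ᶠ k in atTop,
        ‖Aux13.restr {i | i ≤ J k} (f (n (k+1)) ω)‖ ≤ (1/2 : ℝ) ^ (k+1) := by
      refine hω.mono fun k hk => ?_
      simp only [Set.mem_setOf_eq, not_le] at hk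
      exact hk.le
    refine squeeze_zero' (Eventually.of_forall fun k => norm_nonneg _) hbdd ?_
    have := (tendsto_pow_atTop_nhds_zero_of_lt_one (by norm_num : (0:ℝ) ≤ 1/2)
      (by norm_num)).comp (tendsto_add_atTop_nat 1)
    simpa [Function.comp_def] using this
  have aeTail : ∀ᵐ ω ∂μ01, Tendsto
      (fun k => (‖Aux13.restr {i | J (k+1) < i} (f (n (k+1)) ω)‖₊ : ℝ≥0∞)) atTop (𝓝 0) := by
    refine Aux13.ae_tendsto_of_tsum _
      (fun k => ((Aux13.restr _).continuous.comp_aestronglyMeasurable (hm _)).enorm) ?_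
    exact ne_top_of_le_ne_top Aux13.geom_succ_ne_top (ENNReal.tsum_le_tsum fun k => hTail k)
  have hmidint : ∀ k,
      ∫⁻ ω, (‖φ (Aux13.restr (Set.Ioc (J k) (J (k+1))) (f (n (k+1)) ω))‖₊ : ℝ≥0∞) ∂μ01
      ≤ (∑ j ∈ Finset.Ioc (J k) (J (k+1)), (‖φ (Aux13.sing j)‖₊ : ℝ≥0∞)) * C := by
    intro k
    have hpt : ∀ ω, (‖φ (Aux13.restr (Set.Ioc (J k) (J (k+1))) (f (n (k+1)) ω))‖₊ : ℝ≥0∞)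
        ≤ ∑ j ∈ Finset.Ioc (J k) (J (k+1)),
          (‖φ (Aux13.sing j)‖₊ : ℝ≥0∞) * (‖f (n (k+1)) ω j‖₊ : ℝ≥0∞) := by
      intro ω
      rw [Aux13.phi_restr_Ioc]
      calc (‖∑ j ∈ Finset.Ioc (J k) (J (k+1)), f (n (k+1)) ω j * φ (Aux13.sing j)‖₊ : ℝ≥0∞)
          ≤ ∑ j ∈ Finset.Ioc (J k) (J (k+1)),
            (‖f (n (k+1)) ω j * φ (Aux13.sing j)‖₊ : ℝ≥0∞) := by
            rw [← ENNReal.coe_finset_sum]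
            exact ENNReal.coe_le_coe.2 (nnnorm_sum_le _ _)
        _ = ∑ j ∈ Finset.Ioc (J k) (J (k+1)),
            (‖φ (Aux13.sing j)‖₊ : ℝ≥0∞) * (‖f (n (k+1)) ω j‖₊ : ℝ≥0∞) := by
            refine Finset.sum_congr rfl fun j _ => ?_
            rw [nnnorm_mul, ENNReal.coe_mul, mul_comm]
    calc ∫⁻ ω, (‖φ (Aux13.restr (Set.Ioc (J k) (J (k+1))) (f (n (k+1)) ω))‖₊ : ℝ≥0∞) ∂μ01
        ≤ ∫⁻ ω, ∑ j ∈ Finset.Ioc (J k) (J (k+1)),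
            (‖φ (Aux13.sing j)‖₊ : ℝ≥0∞) * (‖f (n (k+1)) ω j‖₊ : ℝ≥0∞) ∂μ01 :=
          lintegral_mono hpt
      _ = ∑ j ∈ Finset.Ioc (J k) (J (k+1)),
            ∫⁻ ω, (‖φ (Aux13.sing j)‖₊ : ℝ≥0∞) * (‖f (n (k+1)) ω j‖₊ : ℝ≥0∞) ∂μ01 := by
          refine lintegral_finset_sum' _ fun j _ => ?_
          exact aemeasurable_const.mul
            (((Aux13.ev j).continuous.comp_aestronglyMeasurable (hm _)).enorm)
      _ = ∑ j ∈ Finset.Ioc (J k) (J (k+1)),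
            (‖φ (Aux13.sing j)‖₊ : ℝ≥0∞) * ∫⁻ ω, (‖f (n (k+1)) ω j‖₊ : ℝ≥0∞) ∂μ01 := by
          refine Finset.sum_congr rfl fun j _ => ?_
          exact lintegral_const_mul' _ _ ENNReal.coe_ne_top
      _ ≤ ∑ j ∈ Finset.Ioc (J k) (J (k+1)), (‖φ (Aux13.sing j)‖₊ : ℝ≥0∞) * C :=
          Finset.sum_le_sum fun j _ => mul_le_mul_right (hcoord _ j) _
      _ = (∑ j ∈ Finset.Ioc (J k) (J (k+1)), (‖φ (Aux13.sing j)‖₊ : ℝ≥0∞)) * C :=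
          (Finset.sum_mul _ _ _).symm
  have aeMid : ∀ᵐ ω ∂μ01, Tendsto
      (fun k => (‖φ (Aux13.restr (Set.Ioc (J k) (J (k+1))) (f (n (k+1)) ω))‖₊ : ℝ≥0∞))
      atTop (𝓝 0) := by
    refine Aux13.ae_tendsto_of_tsum _
      (fun k => ((φ.comp (Aux13.restr _)).continuous.comp_aestronglyMeasurable (hm _)).enorm) ?_
    have htsum : (∑' k, ∫⁻ ω,
        (‖φ (Aux13.restr (Set.Ioc (J k) (J (k+1))) (f (n (k+1)) ω))‖₊ : ℝ≥0∞) ∂μ01)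
        ≤ (‖φ‖₊ : ℝ≥0∞) * C := by
      refine le_trans (ENNReal.tsum_le_tsum hmidint) ?_
      rw [ENNReal.tsum_mul_right]
      refine mul_le_mul_left ?_ C
      rw [ENNReal.tsum_eq_iSup_sum]
      refine iSup_le fun F => ?_
      obtain ⟨m, hmF⟩ := Finset.exists_nat_subset_range F
      refine le_trans (Finset.sum_le_sum_of_subset hmF) ?_
      have hpart : ∀ m : ℕ, ∑ k ∈ Finset.range m, ∑ j ∈ Finset.Ioc (J k) (J (k+1)),
          (‖φ (Aux13.sing j)‖₊ : ℝ≥0∞)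
          = ∑ j ∈ Finset.Ioc (J 0) (J m), (‖φ (Aux13.sing j)‖₊ : ℝ≥0∞) := by
        intro m
        induction m with
        | zero => simp
        | succ m ih =>
          rw [Finset.sum_range_succ, ih,
            Finset.sum_Ioc_consecutive _ (hJmono (Nat.zero_le m)) (hJmono (Nat.le_succ m))]
      rw [hpart]
      exact Aux13.sum_ennorm_phi_sing_le φ _
    exact ne_top_of_le_ne_top (ENNReal.mul_ne_top ENNReal.coe_ne_top hC.ne) htsum
  filter_upwards [aeHead, aeTail, aeMid] with ω h1 h2 h3
  simp only [Pi.zero_apply, map_zero]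
  have h2' : Tendsto (fun k => ‖Aux13.restr {i | J (k+1) < i} (f (n (k+1)) ω)‖) atTop (𝓝 0) := by
    have h := Aux13.enorm_tendsto h2
    rwa [tendsto_zero_iff_norm_tendsto_zero] at h
  have h3' : Tendsto (fun k => φ (Aux13.restr (Set.Ioc (J k) (J (k+1))) (f (n (k+1)) ω)))
      atTop (𝓝 0) := Aux13.enorm_tendsto h3
  have hop : ∀ y : Aux13.C0, |φ y| ≤ ‖φ‖ * ‖y‖ := fun y => by
    rw [← Real.norm_eq_abs]; exact φ.le_opNorm y
  set g : ℕ → ℝ := fun k =>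
    ‖φ‖ * ‖Aux13.restr {i | i ≤ J k} (f (n (k+1)) ω)‖
    + |φ (Aux13.restr (Set.Ioc (J k) (J (k+1))) (f (n (k+1)) ω))|
    + ‖φ‖ * ‖Aux13.restr {i | J (k+1) < i} (f (n (k+1)) ω)‖ with hg
  have hgt : Tendsto g atTop (𝓝 0) := by
    have := ((h1.const_mul ‖φ‖).add h3'.abs).add (h2'.const_mul ‖φ‖)
    simpa [hg, mul_zero, add_zero, abs_zero] using this
  have hbound : ∀ k, |φ (f (n (k+1)) ω)| ≤ g k := by
    intro k
    have hd := Aux13.decomp (J k) (J (k+1)) (hJlt k).le (f (n (k+1)) ω)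
    have heq : φ (f (n (k+1)) ω)
        = φ (Aux13.restr {i | i ≤ J k} (f (n (k+1)) ω))
        + φ (Aux13.restr (Set.Ioc (J k) (J (k+1))) (f (n (k+1)) ω))
        + φ (Aux13.restr {i | J (k+1) < i} (f (n (k+1)) ω)) := by
      conv_lhs => rw [hd]
      rw [map_add, map_add]
    rw [heq, hg]
    have t1 := hop (Aux13.restr {i | i ≤ J k} (f (n (k+1)) ω))
    have t3 := hop (Aux13.restr {i | J (k+1) < i} (f (n (k+1)) ω))
    have habs := abs_add_le (φ (Aux13.restr {i | i ≤ J k} (f (n (k+1)) ω))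
      + φ (Aux13.restr (Set.Ioc (J k) (J (k+1))) (f (n (k+1)) ω)))
      (φ (Aux13.restr {i | J (k+1) < i} (f (n (k+1)) ω)))
    have habs2 := abs_add_le (φ (Aux13.restr {i | i ≤ J k} (f (n (k+1)) ω)))
      (φ (Aux13.restr (Set.Ioc (J k) (J (k+1))) (f (n (k+1)) ω)))
    simp only []
    linarith
  have hgneg : Tendsto (fun k => -g k) atTop (𝓝 0) := by simpa using hgt.neg
  refine tendsto_of_tendsto_of_tendsto_of_le_of_le hgneg hgt ?_ ?_
  · intro k
    exact neg_le_of_abs_le (hbound k)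
  · intro k
    exact le_of_abs_le (hbound k)
end
end
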